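/- arXiv:1709.06268 — 5 statements merged into one kernel-verified Lean document; each statement's English description precedes it below -/
import Mathlib

section
/- Let 0 < λ ≤ 2. Then for every φ ∈ (0,π) and every t > 0, |f^{(λ)}(φ,t)| ≤ |λ−1| · (sin φ)^{λ−1} · ( |cot φ| + 2t/3 ) · e^t. -/
open Real

/-- `g(φ,t) = (cos(φ − it) − cos φ)/t` for `t ≠ 0`, with `g(φ,0) = i sin φ`. -/
noncomputable def gfun (φ t : ℝ) : ℂ :=
  if t = 0 then Complex.I * (Real.sin φ : ℂ)
  else (Complex.cos ((φ : ℂ) - Complex.I * (t : ℂ)) - Complex.cos (φ : ℂ)) / (t : ℂ)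

/-- `f^{(λ)}(φ,t) = (g(φ,t)^{λ−1} − g(φ,0)^{λ−1})/t`, complex powers with the
principal branch. -/
noncomputable def ffun (lam φ t : ℝ) : ℂ :=
  (gfun φ t ^ ((lam : ℂ) - 1) - gfun φ 0 ^ ((lam : ℂ) - 1)) / (t : ℂ)

lemma cosh_sub_one_le (t : ℝ) (ht : 0 ≤ t) : Real.cosh t - 1 ≤ t ^ 2 / 2 * Real.exp t := by
  have h1 : 1 - t ≤ Real.exp (-t) := by
    have := Real.add_one_le_exp (-t); linarith
  have h2 : (0:ℝ) < Real.exp t := Real.exp_pos t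
  have h3 : (1:ℝ) ≤ Real.exp t := by
    have := Real.add_one_le_exp t; linarith
  have hc : Real.cosh t = (Real.exp t + Real.exp (-t)) / 2 := Real.cosh_eq t
  have hinv : Real.exp (-t) = (Real.exp t)⁻¹ := Real.exp_neg t
  rw [hc, hinv]
  rw [div_sub' (two_ne_zero), div_le_iff₀ (by norm_num : (0:ℝ) < 2)] at *
  -- (exp t + (exp t)⁻¹ - 2) ≤ t^2 * exp t  (after clearing)
  have key : Real.exp t + (Real.exp t)⁻¹ - 2 ≤ t ^ 2 * Real.exp t := by
    have hA : Real.exp t - 1 ≤ t * Real.exp t := by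
      have : (1 - t) * Real.exp t ≤ Real.exp (-t) * Real.exp t := by
        apply mul_le_mul_of_nonneg_right h1 h2.le
      rw [← Real.exp_add] at this
      simp at this
      nlinarith
    have hA0 : 0 ≤ Real.exp t - 1 := by linarith
    have hinvpos : 0 < (Real.exp t)⁻¹ := inv_pos.mpr h2
    have hmul : (Real.exp t - 1) ^ 2 ≤ (t * Real.exp t) ^ 2 := by
      apply sq_le_sq' (by nlinarith) hA
    have hid : Real.exp t + (Real.exp t)⁻¹ - 2 = (Real.exp t - 1) ^ 2 * (Real.exp t)⁻¹ := by
      field_simp; ring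
    rw [hid]
    calc (Real.exp t - 1) ^ 2 * (Real.exp t)⁻¹ ≤ (t * Real.exp t) ^ 2 * (Real.exp t)⁻¹ := by
          apply mul_le_mul_of_nonneg_right hmul hinvpos.le
      _ = t ^ 2 * Real.exp t * (Real.exp t * (Real.exp t)⁻¹) := by ring
      _ = t ^ 2 * Real.exp t := by rw [mul_inv_cancel₀ h2.ne']; ring
  nlinarith

lemma sinh_sub_le (t : ℝ) (ht : 0 ≤ t) : Real.sinh t - t ≤ t ^ 3 / 2 * Real.exp t := by
  set F : ℝ → ℝ := fun x => x ^ 3 / 2 * Real.exp x + x - Real.sinh x with hF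
  have hder : ∀ x : ℝ, HasDerivAt F
      (3 * x ^ 2 / 2 * Real.exp x + x ^ 3 / 2 * Real.exp x + 1 - Real.cosh x) x := by
    intro x
    have h1 : HasDerivAt (fun x : ℝ => x ^ 3 / 2 * Real.exp x)
        ((3 * x ^ 2 / 2) * Real.exp x + x ^ 3 / 2 * Real.exp x) x := by
      have := ((hasDerivAt_pow 3 x).div_const 2).mul (Real.hasDerivAt_exp x)
      exact this.congr_deriv (by push_cast; ring)
    have h2 := (h1.add (hasDerivAt_id x)).sub (Real.hasDerivAt_sinh x)
    exact h2.congr_deriv (by ring)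
  have hmono : MonotoneOn F (Set.Ici (0:ℝ)) := by
    apply monotoneOn_of_deriv_nonneg (convex_Ici 0)
    · exact (Continuous.continuousOn (by continuity))
    · intro x _
      exact (hder x).differentiableAt.differentiableWithinAt
    · intro x hx
      rw [interior_Ici] at hx
      rw [(hder x).deriv]
      have hxpos : (0:ℝ) < x := hx
      have := cosh_sub_one_le x hxpos.le
      have he := Real.exp_pos x
      nlinarith [mul_pos (mul_pos hxpos hxpos) he, mul_pos (mul_pos (mul_pos hxpos hxpos) hxpos) he]
  have h0 : F 0 = 0 := by simp [hF]
  have := hmono (Set.self_mem_Ici) (Set.mem_Ici.mpr ht) ht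
  rw [h0] at this
  simp only [hF] at this
  linarith

lemma cpow_mvt (μ : ℝ) (hμ : μ ≤ 1) {m : ℝ} (hm : 0 < m) {v w : ℂ}
    (hv : m ≤ v.im) (hw : m ≤ w.im) :
    ‖w ^ (μ:ℂ) - v ^ (μ:ℂ)‖ ≤ |μ| * m ^ (μ - 1) * ‖w - v‖ := by
  set d : ℂ := w - v with hd
  set z : ℝ → ℂ := fun s => v + (s : ℂ) * d with hz
  have him : ∀ s ∈ Set.Icc (0:ℝ) 1, m ≤ (z s).im := by
    intro s hs
    have : (z s).im = (1 - s) * v.im + s * w.im := by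
      simp [hz, hd, Complex.add_im, Complex.mul_im, Complex.sub_im]
      ring
    rw [this]
    nlinarith [hs.1, hs.2]
  have hslit : ∀ s ∈ Set.Icc (0:ℝ) 1, z s ∈ Complex.slitPlane := by
    intro s hs
    exact Complex.mem_slitPlane_iff.mpr (Or.inr (ne_of_gt (lt_of_lt_of_le hm (him s hs))))
  -- derivative of z
  have hzd : ∀ s : ℝ, HasDerivAt z d s := by
    intro s
    have h1 : HasDerivAt (fun s : ℝ => (s : ℂ)) 1 s := Complex.ofRealCLM.hasDerivAt
    have h2 := (h1.mul_const d).const_add v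
    simpa [hz] using h2
  set f : ℝ → ℂ := fun s => z s ^ (μ : ℂ) with hf
  set f' : ℝ → ℂ := fun s => d * ((μ : ℂ) * z s ^ ((μ : ℂ) - 1)) with hf'
  have hfd : ∀ s ∈ Set.Icc (0:ℝ) 1, HasDerivWithinAt f (f' s) (Set.Icc 0 1) s := by
    intro s hs
    have hcp : HasDerivAt (fun y : ℂ => y ^ (μ : ℂ))
        ((μ : ℂ) * z s ^ ((μ : ℂ) - 1)) (z s) :=
      (Complex.hasStrictDerivAt_cpow_const (hslit s hs)).hasDerivAt
    have := (hcp.hasFDerivAt.restrictScalars ℝ).comp_hasDerivAt s (hzd s)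
    have h2 : HasDerivAt f (d * ((μ : ℂ) * z s ^ ((μ : ℂ) - 1))) s := by
      exact this.congr_deriv (by rw [ContinuousLinearMap.coe_restrictScalars', ContinuousLinearMap.toSpanSingleton_apply, smul_eq_mul])
    exact h2.hasDerivWithinAt
  have hbound : ∀ s ∈ Set.Ico (0:ℝ) 1, ‖f' s‖ ≤ ‖d‖ * (|μ| * m ^ (μ - 1)) := by
    intro s hs
    have hs' : s ∈ Set.Icc (0:ℝ) 1 := ⟨hs.1, hs.2.le⟩
    have habs : ‖z s ^ ((μ : ℂ) - 1)‖ = ‖z s‖ ^ (μ - 1) := by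
      have : ((μ : ℂ) - 1) = ((μ - 1 : ℝ) : ℂ) := by push_cast; ring
      rw [this, Complex.norm_cpow_real]
    have hmz : m ≤ ‖z s‖ :=
      le_trans (him s hs') (le_trans (le_abs_self _) (Complex.abs_im_le_norm _))
    have hrz : ‖z s‖ ^ (μ - 1) ≤ m ^ (μ - 1) :=
      Real.rpow_le_rpow_of_nonpos hm hmz (by linarith)
    calc ‖f' s‖ = ‖d‖ * (|μ| * ‖z s ^ ((μ : ℂ) - 1)‖) := by
          simp [hf', Complex.norm_real]
      _ ≤ ‖d‖ * (|μ| * m ^ (μ - 1)) := by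
          rw [habs]
          apply mul_le_mul_of_nonneg_left _ (norm_nonneg d)
          exact mul_le_mul_of_nonneg_left hrz (abs_nonneg μ)
  have key := norm_image_sub_le_of_norm_deriv_le_segment' hfd hbound 1 (by norm_num)
  have hz1 : z 1 = w := by simp [hz, hd]
  have hz0 : z 0 = v := by simp [hz]
  rw [hf] at key
  simp only [hz1, hz0] at key
  calc ‖w ^ (μ:ℂ) - v ^ (μ:ℂ)‖ ≤ ‖d‖ * (|μ| * m ^ (μ - 1)) * (1 - 0) := key
    _ = |μ| * m ^ (μ - 1) * ‖w - v‖ := by rw [hd]; ring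

lemma gfun_eq (φ t : ℝ) (ht : t ≠ 0) :
    gfun φ t = ((Real.cos φ * (Real.cosh t - 1) / t : ℝ) : ℂ)
      + ((Real.sin φ * Real.sinh t / t : ℝ) : ℂ) * Complex.I := by
  rw [gfun, if_neg ht]
  have h1 : Complex.cos ((φ:ℂ) - Complex.I * t) =
      (Real.cos φ : ℂ) * (Real.cosh t : ℂ) + (Real.sin φ : ℂ) * (Real.sinh t : ℂ) * Complex.I := by
    rw [mul_comm Complex.I, Complex.cos_sub, Complex.cos_mul_I, Complex.sin_mul_I,
      ← Complex.ofReal_cos, ← Complex.ofReal_sin, ← Complex.ofReal_cosh, ← Complex.ofReal_sinh]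
    ring
  rw [h1, ← Complex.ofReal_cos]
  have htc : (t : ℂ) ≠ 0 := Complex.ofReal_ne_zero.mpr ht
  push_cast
  field_simp
  ring

theorem ffun_bound_small_lambda (lam : ℝ) (hlam0 : 0 < lam) (hlam2 : lam ≤ 2)
    (φ t : ℝ) (hφ : φ ∈ Set.Ioo 0 π) (ht : 0 < t) :
    ‖ffun lam φ t‖ ≤
      |lam - 1| * Real.sin φ ^ (lam - 1) *
        (|Real.cos φ / Real.sin φ| + 2 * t / 3) * Real.exp t := by
  set s := Real.sin φ with hs
  have hspos : 0 < s := Real.sin_pos_of_pos_of_lt_pi hφ.1 hφ.2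
  set a : ℝ := Real.cos φ * (Real.cosh t - 1) / t with ha
  set b : ℝ := s * Real.sinh t / t with hb
  have hgt : gfun φ t = (a : ℂ) + (b : ℂ) * Complex.I := gfun_eq φ t ht.ne'
  have hg0 : gfun φ 0 = Complex.I * (s : ℂ) := by rw [gfun, if_pos rfl]
  have hsinh : t ≤ Real.sinh t := Real.self_le_sinh_iff.mpr ht.le
  have hcosh : 1 ≤ Real.cosh t := Real.one_le_cosh t
  -- imaginary parts bounded below by s
  have him0 : (gfun φ 0).im = s := by rw [hg0]; simp
  have himt : (gfun φ t).im = b := by rw [hgt]; simp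
  have hbs : s ≤ b := by
    rw [hb]
    rw [le_div_iff₀ ht]
    nlinarith
  -- apply MVT lemma with μ = lam - 1
  have hcast : ((lam : ℂ) - 1) = ((lam - 1 : ℝ) : ℂ) := by push_cast; ring
  have hmvt := cpow_mvt (lam - 1) (by linarith) hspos
    (v := gfun φ 0) (w := gfun φ t) (by rw [him0]) (by rw [himt]; exact hbs)
  -- bound |gt - g0|
  have hdiff : ‖gfun φ t - gfun φ 0‖ ≤
      |Real.cos φ| * (Real.cosh t - 1) / t + s * (Real.sinh t - t) / t := by
    have hre : (gfun φ t - gfun φ 0).re = a := by rw [hgt, hg0]; simp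
    have him : (gfun φ t - gfun φ 0).im = b - s := by rw [hgt, hg0]; simp
    calc ‖gfun φ t - gfun φ 0‖ ≤ |(gfun φ t - gfun φ 0).re| + |(gfun φ t - gfun φ 0).im|
          := Complex.norm_le_abs_re_add_abs_im _
      _ = |a| + |b - s| := by rw [hre, him]
      _ = |Real.cos φ| * (Real.cosh t - 1) / t + s * (Real.sinh t - t) / t := by
          rw [abs_of_nonneg (by linarith : (0:ℝ) ≤ b - s)]
          rw [ha, abs_div, abs_of_pos ht, abs_mul, abs_of_nonneg (by linarith : (0:ℝ) ≤ Real.cosh t - 1)]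
          rw [hb]
          field_simp
  -- put it together
  have habs_ffun : ‖ffun lam φ t‖ =
      ‖gfun φ t ^ ((lam:ℂ) - 1) - gfun φ 0 ^ ((lam:ℂ) - 1)‖ / t := by
    rw [ffun, norm_div, Complex.norm_real, Real.norm_eq_abs, abs_of_pos ht]
  rw [habs_ffun, hcast]
  rw [div_le_iff₀ ht]
  have hK : (0:ℝ) ≤ |lam - 1| * s ^ (lam - 1 - 1) := by positivity
  have step1 : ‖gfun φ t ^ (((lam - 1 : ℝ)):ℂ) - gfun φ 0 ^ (((lam - 1:ℝ)):ℂ)‖ ≤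
      |lam - 1| * s ^ (lam - 1 - 1) *
        (|Real.cos φ| * (Real.cosh t - 1) / t + s * (Real.sinh t - t) / t) := by
    refine le_trans hmvt ?_
    exact mul_le_mul_of_nonneg_left hdiff hK
  refine le_trans step1 ?_
  -- final elementary inequality
  have hrpow : s ^ (lam - 1) = s ^ (lam - 1 - 1) * s := by
    have h := Real.rpow_add hspos (lam - 1 - 1) 1
    rw [Real.rpow_one, show lam - 1 - 1 + 1 = lam - 1 by ring] at h
    exact h
  have hcot : |Real.cos φ / s| = |Real.cos φ| / s := by
    rw [abs_div, abs_of_pos hspos]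
  rw [hcot, hrpow]
  have hcore : |Real.cos φ| * (Real.cosh t - 1) / t + s * (Real.sinh t - t) / t ≤
      s * (|Real.cos φ| / s + 2 * t / 3) * Real.exp t * t := by
    have h1 := cosh_sub_one_le t ht.le
    have h2 := sinh_sub_le t ht.le
    have he : (0:ℝ) < Real.exp t := Real.exp_pos t
    have hc : (0:ℝ) ≤ |Real.cos φ| := abs_nonneg _
    have hexp : s * (|Real.cos φ| / s + 2 * t / 3) = |Real.cos φ| + s * (2 * t / 3) := by
      field_simp
    rw [hexp]
    rw [← add_div, div_le_iff₀ ht]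
    have e1 : |Real.cos φ| * (Real.cosh t - 1) ≤ |Real.cos φ| * (t ^ 2 / 2 * Real.exp t) :=
      mul_le_mul_of_nonneg_left h1 hc
    have e2 : s * (Real.sinh t - t) ≤ s * (t ^ 3 / 2 * Real.exp t) :=
      mul_le_mul_of_nonneg_left h2 hspos.le
    nlinarith [mul_pos hspos he, mul_pos (mul_pos hspos he) ht,
      mul_nonneg (mul_nonneg hc he.le) (mul_pos ht ht).le]
  calc |lam - 1| * s ^ (lam - 1 - 1) *
        (|Real.cos φ| * (Real.cosh t - 1) / t + s * (Real.sinh t - t) / t)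
      ≤ |lam - 1| * s ^ (lam - 1 - 1) * (s * (|Real.cos φ| / s + 2 * t / 3) * Real.exp t * t) :=
        mul_le_mul_of_nonneg_left hcore hK
    _ = |lam - 1| * (s ^ (lam - 1 - 1) * s) * (|Real.cos φ| / s + 2 * t / 3) * Real.exp t * t := by
        ring
end

section
/- Let λ > 2. Then for every φ ∈ (0,π) and every t > 0, |f^{(λ)}(φ,t)| ≤ 2^{λ/2} · (λ−1) · (sin φ)^{λ−1} · ( |cot φ| + 2t/3 ) · ( 1 + (|cot φ|^{λ−2}/2^{λ−2}) · t^{λ−2} · e^{(λ−2)t} ) · e^{(λ−1)t}. -/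
open Real

lemma aux_exp_neg_le_one {t : ℝ} (ht : 0 ≤ t) : Real.exp (-t) ≤ 1 := by
  rw [Real.exp_le_one_iff]; linarith

lemma aux_sinh_le {t : ℝ} (ht : 0 ≤ t) : Real.sinh t ≤ t * Real.exp t := by
  rw [Real.sinh_eq]
  have h1 : (-(2*t)) + 1 ≤ Real.exp (-(2*t)) := Real.add_one_le_exp _
  have h5 : Real.exp (-t) * Real.exp (-t) = Real.exp (-(2*t)) := by
    rw [← Real.exp_add]; ring_nf
  have h3 : Real.exp (-t) * Real.exp t = 1 := by rw [← Real.exp_add]; simp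
  nlinarith [Real.exp_pos t, Real.exp_pos (-t)]

lemma aux_cosh_le {t : ℝ} (ht : 0 ≤ t) : Real.cosh t - 1 ≤ t^2/2 * Real.exp t := by
  rw [Real.cosh_eq]
  have h1 : (-t) + 1 ≤ Real.exp (-t) := Real.add_one_le_exp _
  have h2 : Real.exp (-t) ≤ 1 := aux_exp_neg_le_one ht
  have h3 : Real.exp (-t) * Real.exp t = 1 := by rw [← Real.exp_add]; simp
  nlinarith [Real.exp_pos t, Real.exp_pos (-t)]

lemma aux_sinh_le_mul_cosh {t : ℝ} (ht : 0 ≤ t) : Real.sinh t ≤ t * Real.cosh t := by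
  have hd : ∀ x : ℝ, HasDerivAt (fun s => s * Real.cosh s - Real.sinh s) (x * Real.sinh x) x := by
    intro x
    have h1 := ((hasDerivAt_id x).mul (Real.hasDerivAt_cosh x)).sub (Real.hasDerivAt_sinh x)
    exact h1.congr_deriv (by simp only [id]; ring)
  have mono : MonotoneOn (fun s => s * Real.cosh s - Real.sinh s) (Set.Ici (0:ℝ)) := by
    apply monotoneOn_of_deriv_nonneg (convex_Ici 0)
    · exact ((continuous_id.mul Real.continuous_cosh).sub Real.continuous_sinh).continuousOn
    · intro x _
      exact ((hd x).differentiableAt).differentiableWithinAt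
    · intro x hx
      rw [(hd x).deriv]
      rw [interior_Ici] at hx
      exact mul_nonneg (le_of_lt hx) (Real.sinh_nonneg_iff.mpr (le_of_lt hx))
  have := mono (Set.self_mem_Ici) (by exact ht : t ∈ Set.Ici (0:ℝ)) ht
  simpa using this

lemma key_cpow {z w : ℂ} (hz : 0 < z.im) (hw : 0 < w.im) {c : ℝ} (hc : 1 ≤ c)
    {M : ℝ} (hzM : ‖z‖ ≤ M) (hwM : ‖w‖ ≤ M) :
    ‖z ^ (c:ℂ) - w ^ (c:ℂ)‖ ≤ c * M ^ (c-1) * ‖z - w‖ := by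
  have hconv : Convex ℝ (segment ℝ w z) := convex_segment _ _
  have him : ∀ x ∈ segment ℝ w z, 0 < x.im := by
    rintro x ⟨a, b, ha, hb, hab, rfl⟩
    simp only [Complex.add_im, Complex.smul_im, smul_eq_mul]
    rcases lt_or_eq_of_le ha with ha' | ha'
    · have h1 : 0 < a * w.im := mul_pos ha' hw
      have h2 : 0 ≤ b * z.im := mul_nonneg hb hz.le
      linarith
    · have hb1 : b = 1 := by linarith
      rw [← ha', hb1]; simpa using hz
  have habs : ∀ x ∈ segment ℝ w z, ‖x‖ ≤ M := by
    rintro x ⟨a, b, ha, hb, hab, rfl⟩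
    calc ‖a • w + b • z‖ ≤ ‖a • w‖ + ‖b • z‖ :=
          norm_add_le _ _
      _ = a * ‖w‖ + b * ‖z‖ := by
          rw [norm_smul, norm_smul]
          simp [abs_of_nonneg ha, abs_of_nonneg hb]
      _ ≤ a * M + b * M := add_le_add (mul_le_mul_of_nonneg_left hwM ha)
          (mul_le_mul_of_nonneg_left hzM hb)
      _ = M := by rw [← add_mul, hab, one_mul]
  have hder : ∀ x ∈ segment ℝ w z,
      HasDerivWithinAt (fun s : ℂ => s ^ (c:ℂ)) ((c:ℂ) * x ^ ((c:ℂ)-1)) (segment ℝ w z) x := by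
    intro x hx
    exact ((Complex.hasStrictDerivAt_cpow_const
      (Complex.mem_slitPlane_iff.mpr (Or.inr (him x hx).ne'))).hasDerivAt).hasDerivWithinAt
  have hbound : ∀ x ∈ segment ℝ w z, ‖(c:ℂ) * x ^ ((c:ℂ)-1)‖ ≤ c * M ^ (c-1) := by
    intro x hx
    have hcast : ((c:ℂ)-1) = (((c-1 : ℝ)):ℂ) := by push_cast; ring
    rw [norm_mul, hcast, Complex.norm_real, Real.norm_eq_abs,
      Complex.norm_cpow_real, abs_of_nonneg (by linarith : (0:ℝ) ≤ c)]
    exact mul_le_mul_of_nonneg_left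
      (Real.rpow_le_rpow (norm_nonneg x) (habs x hx) (by linarith)) (by linarith)
  have := hconv.norm_image_sub_le_of_norm_hasDerivWithin_le hder hbound
    (left_mem_segment ℝ w z) (right_mem_segment ℝ w z)
  simpa only using this

set_option maxHeartbeats 2000000 in
theorem ffun_bound_large_lambda (lam : ℝ) (hlam : 2 < lam)
    (φ t : ℝ) (hφ : φ ∈ Set.Ioo 0 π) (ht : 0 < t) :
    ‖ffun lam φ t‖ ≤
      2 ^ (lam / 2) * (lam - 1) * Real.sin φ ^ (lam - 1) *
        (|Real.cos φ / Real.sin φ| + 2 * t / 3) *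
        (1 + |Real.cos φ / Real.sin φ| ^ (lam - 2) / 2 ^ (lam - 2) *
          t ^ (lam - 2) * Real.exp ((lam - 2) * t)) *
        Real.exp ((lam - 1) * t) := by
  obtain ⟨hφ1, hφ2⟩ := hφ
  have hs : 0 < Real.sin φ := Real.sin_pos_of_pos_of_lt_pi hφ1 hφ2
  set q := |Real.cos φ / Real.sin φ| with hqdef
  set p := lam - 2 with hpdef
  set s := Real.sin φ with hsdef
  have hp : 0 < p := by rw [hpdef]; linarith
  have hq0 : 0 ≤ q := abs_nonneg _
  have hco : |Real.cos φ| = s * q := by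
    rw [hqdef, abs_div, abs_of_pos hs]; field_simp
  -- values of gfun
  have hw : gfun φ 0 = Complex.I * (s : ℂ) := by rw [gfun, if_pos rfl]
  have hz : gfun φ t = ((Real.cos φ * (Real.cosh t - 1) / t : ℝ) : ℂ)
      + ((s * Real.sinh t / t : ℝ) : ℂ) * Complex.I := by
    rw [hsdef, gfun, if_neg ht.ne']
    have h1 : (φ:ℂ) - Complex.I * (t:ℂ) = (φ:ℂ) + ((-t : ℝ):ℂ) * Complex.I := by push_cast; ring
    rw [h1, Complex.cos_add_mul_I]
    rw [show ((-t:ℝ):ℂ) = -(t:ℂ) by push_cast; ring]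
    rw [Complex.cosh_neg, Complex.sinh_neg]
    rw [← Complex.ofReal_cos, ← Complex.ofReal_sin, ← Complex.ofReal_cosh, ← Complex.ofReal_sinh]
    have ht' : (t:ℂ) ≠ 0 := Complex.ofReal_ne_zero.mpr ht.ne'
    push_cast
    field_simp
    ring
  set A := Real.cos φ * (Real.cosh t - 1) / t with hA
  set B := s * Real.sinh t / t with hB
  have hcosh1 : 0 ≤ Real.cosh t - 1 := by have := Real.one_le_cosh t; linarith
  have hsinh0 : 0 < Real.sinh t := Real.sinh_pos_iff.mpr ht
  have hzim : 0 < (gfun φ t).im := by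
    rw [hz]; simp only [Complex.add_im, Complex.ofReal_im, Complex.mul_im, Complex.ofReal_re,
      Complex.I_im, Complex.I_re, mul_zero, mul_one, zero_add, add_zero]
    rw [hB]; positivity
  have hwim : 0 < (gfun φ 0).im := by
    rw [hw]; simpa using hs
  have hwabs : ‖gfun φ 0‖ = s := by
    rw [hw]; simp [abs_of_pos hs]
  set X := |Real.cos φ| * (Real.cosh t - 1) / t with hX
  have hX0 : 0 ≤ X := by rw [hX]; positivity
  have hB0 : 0 ≤ B := by rw [hB]; positivity
  have hXabs : |A| = X := by
    rw [hA, hX, abs_div, abs_mul, abs_of_nonneg hcosh1, abs_of_pos ht]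
  -- abs bounds
  set M := max (Real.sqrt 2 * max X B) s with hM
  have hmaxXB0 : 0 ≤ max X B := le_trans hX0 (le_max_left _ _)
  have hzM : ‖gfun φ t‖ ≤ M := by
    rw [hz, Complex.norm_add_mul_I]
    refine le_trans ?_ (le_max_left _ _)
    rw [show Real.sqrt 2 * max X B = Real.sqrt (2 * (max X B)^2) by
      rw [Real.sqrt_mul (by norm_num), Real.sqrt_sq hmaxXB0]]
    apply Real.sqrt_le_sqrt
    have h1 : A^2 ≤ (max X B)^2 := by
      rw [← sq_abs A, hXabs]; exact pow_le_pow_left₀ hX0 (le_max_left _ _) 2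
    have h2 : B^2 ≤ (max X B)^2 := pow_le_pow_left₀ hB0 (le_max_right _ _) 2
    linarith
  have hwM : ‖gfun φ 0‖ ≤ M := by rw [hwabs]; exact le_max_right _ _
  -- key mean value estimate
  have hc1 : (1:ℝ) ≤ lam - 1 := by linarith
  have key := key_cpow hzim hwim hc1 hzM hwM
  rw [show lam - 1 - 1 = p by rw [hpdef]; ring] at key
  rw [show ((lam - 1 : ℝ) : ℂ) = (lam:ℂ) - 1 by push_cast; ring] at key
  -- real estimates
  have hXle : X ≤ s * q * (t/2) * Real.exp t := by
    rw [hX, hco]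
    calc s * q * (Real.cosh t - 1) / t ≤ s * q * (t^2/2 * Real.exp t) / t := by
          gcongr
          exact aux_cosh_le ht.le
      _ = s * q * (t/2) * Real.exp t := by field_simp
  have hBle : B ≤ s * Real.exp t := by
    rw [hB]
    calc s * Real.sinh t / t ≤ s * (t * Real.exp t) / t := by
          gcongr
          exact aux_sinh_le ht.le
      _ = s * Real.exp t := by field_simp
  -- bound on |z - w|
  have hzw : ‖gfun φ t - gfun φ 0‖ ≤ X + s * (t^2/2) * Real.exp t := by
    have hsub : gfun φ t - gfun φ 0 = (A:ℂ) + ((B - s : ℝ):ℂ) * Complex.I := by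
      rw [hz, hw]; push_cast; ring
    have hre : (gfun φ t - gfun φ 0).re = A := by rw [hsub]; simp
    have him : (gfun φ t - gfun φ 0).im = B - s := by rw [hsub]; simp
    refine le_trans (Complex.norm_le_abs_re_add_abs_im _) ?_
    rw [hre, him, hXabs]
    have h1 : t ≤ Real.sinh t := (Real.self_lt_sinh_iff.mpr ht).le
    have h2 : B - s = s * (Real.sinh t - t) / t := by rw [hB]; field_simp
    have h3 : Real.sinh t - t ≤ t * (Real.cosh t - 1) := by
      nlinarith [aux_sinh_le_mul_cosh ht.le]
    have h4 : Real.sinh t - t ≤ t * (t^2/2 * Real.exp t) :=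
      le_trans h3 (mul_le_mul_of_nonneg_left (aux_cosh_le ht.le) ht.le)
    have h5 : 0 ≤ Real.sinh t - t := by linarith
    have h6 : |B - s| ≤ s * (t^2/2) * Real.exp t := by
      rw [h2, abs_of_nonneg (by positivity)]
      calc s * (Real.sinh t - t) / t ≤ s * (t * (t^2/2 * Real.exp t)) / t := by gcongr
        _ = s * (t^2/2) * Real.exp t := by field_simp
    linarith
  have hD : ‖gfun φ t - gfun φ 0‖ / t ≤ s * (3/4 * (q + 2*t/3)) * Real.exp t := by
    have hstep : X + s * (t^2/2) * Real.exp t ≤ (s * q * (t/2) * Real.exp t)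
        + s * (t^2/2) * Real.exp t := by linarith
    calc ‖gfun φ t - gfun φ 0‖ / t
        ≤ (s * q * (t/2) * Real.exp t + s * (t^2/2) * Real.exp t) / t := by
          gcongr
          exact le_trans hzw hstep
      _ = s * (q/2 + t/2) * Real.exp t := by field_simp
      _ ≤ s * (3/4 * (q + 2*t/3)) * Real.exp t := by
          have hq2 : q/2 + t/2 ≤ 3/4 * (q + 2*t/3) := by linarith
          have he : 0 < Real.exp t := Real.exp_pos t
          nlinarith [hs.le, he.le]
  -- bound on M^p
  set a := q ^ p / 2 ^ p * t ^ p with hadef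
  set E := Real.exp (p * t) with hEdef
  have hexpt : (Real.exp t) ^ p = E := by rw [hEdef, ← Real.exp_mul, mul_comm]
  have hE1 : (1:ℝ) ≤ E := by rw [hEdef]; exact Real.one_le_exp (by positivity)
  have ha0 : 0 ≤ a := by rw [hadef]; positivity
  have hsp0 : 0 < s ^ p := Real.rpow_pos_of_pos hs p
  have hP1 : (1:ℝ) ≤ (2:ℝ) ^ (p/2) := by
    rw [show (1:ℝ) = (2:ℝ) ^ (0:ℝ) by simp]
    exact Real.rpow_le_rpow_of_exponent_le (by norm_num) (by positivity)
  have hXp : X ^ p ≤ s ^ p * a * E := by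
    calc X ^ p ≤ (s * q * (t/2) * Real.exp t) ^ p := Real.rpow_le_rpow hX0 hXle hp.le
      _ = s ^ p * a * E := by
          rw [Real.mul_rpow (by positivity) (Real.exp_pos t).le,
            Real.mul_rpow (by positivity) (by positivity),
            Real.mul_rpow hs.le hq0, Real.div_rpow ht.le (by norm_num), hexpt, hadef]
          ring
  have hBp : B ^ p ≤ s ^ p * E := by
    calc B ^ p ≤ (s * Real.exp t) ^ p := Real.rpow_le_rpow hB0 hBle hp.le
      _ = s ^ p * E := by rw [Real.mul_rpow hs.le (Real.exp_pos t).le, hexpt]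
  have hMp : M ^ p ≤ 2 * (2:ℝ)^(p/2) * s^p * E * (1 + a * E) := by
    have hu : (Real.sqrt 2 * max X B) ^ p = (2:ℝ)^(p/2) * (max X B) ^ p := by
      rw [Real.mul_rpow (Real.sqrt_nonneg 2) hmaxXB0, Real.sqrt_eq_rpow,
        ← Real.rpow_mul (by norm_num), show (1:ℝ)/2*p = p/2 by ring]
    have hmaxp : (max X B) ^ p ≤ X ^ p + B ^ p := by
      rcases max_cases X B with ⟨h, _⟩ | ⟨h, _⟩ <;> rw [h]
      · exact le_add_of_nonneg_right (Real.rpow_nonneg hB0 p)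
      · exact le_add_of_nonneg_left (Real.rpow_nonneg hX0 p)
    have h0 : M ^ p ≤ (2:ℝ)^(p/2) * (X ^ p + B ^ p) + s ^ p := by
      rcases max_cases (Real.sqrt 2 * max X B) s with ⟨h, _⟩ | ⟨h, _⟩ <;> rw [hM, h]
      · rw [hu] at *
        have := mul_le_mul_of_nonneg_left hmaxp (by positivity : (0:ℝ) ≤ (2:ℝ)^(p/2))
        rw [hu]
        nlinarith [hsp0.le]
      · nlinarith [Real.rpow_nonneg hX0 p, Real.rpow_nonneg hB0 p,
          mul_nonneg (by positivity : (0:ℝ) ≤ (2:ℝ)^(p/2))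
            (add_nonneg (Real.rpow_nonneg hX0 p) (Real.rpow_nonneg hB0 p))]
    have h1 : (2:ℝ)^(p/2) * (X ^ p + B ^ p) ≤ (2:ℝ)^(p/2) * (s^p * a * E + s^p * E) :=
      mul_le_mul_of_nonneg_left (add_le_add hXp hBp) (by positivity)
    have hE0 : (0:ℝ) ≤ E := by linarith
    have h2 : (1:ℝ) ≤ E * (1 + a * E) := by
      nlinarith [mul_nonneg ha0 (mul_nonneg hE0 hE0)]
    have h3 : s ^ p ≤ (2:ℝ)^(p/2) * s^p * E * (1 + a * E) := by
      calc s ^ p = s ^ p * 1 := (mul_one _).symm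
        _ ≤ s ^ p * ((2:ℝ)^(p/2) * (E * (1 + a*E))) := by
            refine mul_le_mul_of_nonneg_left ?_ hsp0.le
            calc (1:ℝ) = 1 * 1 := by norm_num
              _ ≤ (2:ℝ)^(p/2) * (E * (1+a*E)) :=
                  mul_le_mul hP1 h2 zero_le_one (by positivity)
        _ = (2:ℝ)^(p/2) * s^p * E * (1 + a*E) := by ring
    have h4 : (2:ℝ)^(p/2) * (s^p * a * E + s^p * E) ≤ (2:ℝ)^(p/2) * s^p * E * (1 + a * E) := by
      have hkey : s^p * a * E + s^p * E ≤ s^p * E * (1 + a * E) := by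
        nlinarith [mul_nonneg (mul_nonneg (mul_nonneg hsp0.le ha0) hE0)
          (by linarith : (0:ℝ) ≤ E - 1)]
      calc (2:ℝ)^(p/2) * (s^p * a * E + s^p * E)
          ≤ (2:ℝ)^(p/2) * (s^p * E * (1 + a * E)) :=
            mul_le_mul_of_nonneg_left hkey (by positivity)
        _ = (2:ℝ)^(p/2) * s^p * E * (1 + a * E) := by ring
    linarith
  -- assemble
  have hfabs : ‖ffun lam φ t‖
      = ‖gfun φ t ^ ((lam:ℂ)-1) - gfun φ 0 ^ ((lam:ℂ)-1)‖ / t := by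
    rw [ffun, norm_div, Complex.norm_real, Real.norm_eq_abs, abs_of_pos ht]
  have hlam1 : (0:ℝ) ≤ lam - 1 := by linarith
  have hMp0 : 0 ≤ M ^ p := Real.rpow_nonneg (le_trans hs.le (le_max_right _ _)) p
  calc ‖ffun lam φ t‖
      = ‖gfun φ t ^ ((lam:ℂ)-1) - gfun φ 0 ^ ((lam:ℂ)-1)‖ / t := hfabs
    _ ≤ ((lam - 1) * M ^ p * ‖gfun φ t - gfun φ 0‖) / t := by gcongr
    _ = (lam - 1) * M ^ p * (‖gfun φ t - gfun φ 0‖ / t) := by ring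
    _ ≤ (lam - 1) * (2 * (2:ℝ)^(p/2) * s^p * E * (1 + a * E))
          * (s * (3/4 * (q + 2*t/3)) * Real.exp t) := by
        gcongr
    _ = (3/4) * ((2 * (2:ℝ)^(p/2)) * (lam - 1) * (s^p * s) * (q + 2*t/3) * (1 + a * E)
          * (E * Real.exp t)) := by ring
    _ ≤ 1 * ((2 * (2:ℝ)^(p/2)) * (lam - 1) * (s^p * s) * (q + 2*t/3) * (1 + a * E)
          * (E * Real.exp t)) := by
        refine mul_le_mul_of_nonneg_right (by norm_num) ?_
        have hA1 : (0:ℝ) ≤ q + 2*t/3 := by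
          have : (0:ℝ) ≤ 2*t/3 := by positivity
          linarith
        have hA2 : (0:ℝ) ≤ 1 + a * E := by
          have := mul_nonneg ha0 (by linarith : (0:ℝ) ≤ E)
          linarith
        have hA3 : (0:ℝ) ≤ E * Real.exp t := mul_nonneg (by linarith) (Real.exp_pos t).le
        have hA4 : (0:ℝ) ≤ 2 * (2:ℝ)^(p/2) := by positivity
        have hA5 : (0:ℝ) ≤ s^p * s := mul_nonneg hsp0.le hs.le
        exact mul_nonneg (mul_nonneg (mul_nonneg (mul_nonneg (mul_nonneg hA4 hlam1) hA5) hA1) hA2) hA3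
    _ = 2 ^ (lam / 2) * (lam - 1) * s ^ (lam - 1) * (q + 2 * t / 3) * (1 + a * E)
          * Real.exp ((lam - 1) * t) := by
        rw [show (2:ℝ) * (2:ℝ)^(p/2) = 2 ^ (lam/2) by
            rw [show lam/2 = p/2 + 1 by rw [hpdef]; ring, Real.rpow_add_one (by norm_num)]; ring,
          show s^p * s = s ^ (lam - 1) by
            rw [← Real.rpow_add_one hs.ne' p, show p + 1 = lam - 1 by rw [hpdef]; ring],
          show E * Real.exp t = Real.exp ((lam - 1) * t) by
            rw [hEdef, ← Real.exp_add]; congr 1; rw [hpdef]; ring]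
        ring
end

section
/- Let λ > −1/2 be real and let ν ≥ 1 be real. Then for every x ∈ (−1,1], (ν+2λ) · ʳG_{ν+1}^{(λ)}(x) = 2(ν+λ) · x · ʳG_ν^{(λ)}(x) − ν · ʳG_{ν−1}^{(λ)}(x). -/
open Real

/-- Pochhammer symbol `(a)_n = a (a+1) ⋯ (a+n-1)` for a real base. -/
noncomputable def poch (a : ℝ) (n : ℕ) : ℝ := ∏ i ∈ Finset.range n, (a + (i : ℝ))

/-- The right generalized Gegenbauer function of fractional degree. -/
noncomputable def rG (lam nu x : ℝ) : ℝ :=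
  ∑' j : ℕ, (poch (-nu) j * poch (nu + 2 * lam) j /
    ((j.factorial : ℝ) * poch (lam + 1 / 2) j)) * ((1 - x) / 2) ^ j

noncomputable def ggfCoeff (lam mu : ℝ) (j : ℕ) : ℝ :=
  poch (-mu) j * poch (mu + 2 * lam) j / ((j.factorial : ℝ) * poch (lam + 1 / 2) j)

lemma poch_zero (a : ℝ) : poch a 0 = 1 := by simp [poch]

lemma poch_succ (a : ℝ) (n : ℕ) : poch a (n + 1) = poch a n * (a + n) :=
  Finset.prod_range_succ _ _

lemma poch_succ' (a : ℝ) (n : ℕ) : poch a (n + 1) = a * poch (a + 1) n := by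
  unfold poch
  rw [Finset.prod_range_succ', mul_comm]
  congr 1
  · push_cast; simp
  · apply Finset.prod_congr rfl; intros; push_cast; ring

lemma poch_pos {a : ℝ} (ha : 0 < a) (n : ℕ) : 0 < poch a n := by
  unfold poch
  apply Finset.prod_pos
  intro i _
  positivity

lemma algE1 (lam nu M P Q R F B : ℝ) (hnl : nu + 2 * lam ≠ 0) (hR : R ≠ 0) (hF : F ≠ 0)
    (hm1 : M + 1 ≠ 0) (hRm : lam + 1 / 2 + M ≠ 0)
    (e2 : B * (nu + 2 * lam) = Q * (nu + 2 * lam + M) * (nu + 2 * lam + M + 1)) :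
    (nu + 2 * lam) * (-(nu + 1) * P * B / ((M + 1) * F * (R * (lam + 1 / 2 + M)))) *
      ((M + 1) * (lam + 1 / 2 + M)) =
    P * Q / (F * R) * -(nu + 1) * (nu + 2 * lam + M) * (nu + 2 * lam + M + 1) := by
  have hD1 : (M + 1) * F * (R * (lam + 1 / 2 + M)) ≠ 0 :=
    mul_ne_zero (mul_ne_zero hm1 hF) (mul_ne_zero hR hRm)
  have hD2 : F * R ≠ 0 := mul_ne_zero hF hR
  rw [show (nu + 2 * lam) * (-(nu + 1) * P * B / ((M + 1) * F * (R * (lam + 1 / 2 + M)))) *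
      ((M + 1) * (lam + 1 / 2 + M))
      = ((nu + 2 * lam) * (-(nu + 1) * P * B) * ((M + 1) * (lam + 1 / 2 + M))) /
        ((M + 1) * F * (R * (lam + 1 / 2 + M))) from by ring,
    show P * Q / (F * R) * -(nu + 1) * (nu + 2 * lam + M) * (nu + 2 * lam + M + 1)
      = (P * Q * -(nu + 1) * (nu + 2 * lam + M) * (nu + 2 * lam + M + 1)) / (F * R) from by ring,
    div_eq_div_iff hD1 hD2]
  linear_combination (-(nu + 1) * P * ((M + 1) * (lam + 1 / 2 + M)) * F * R) * e2

lemma algE2 (lam nu M P Q R F : ℝ) (hR : R ≠ 0) (hF : F ≠ 0)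
    (hm1 : M + 1 ≠ 0) (hRm : lam + 1 / 2 + M ≠ 0) :
    2 * (nu + lam) * (P * (-nu + M) * (Q * (nu + 2 * lam + M)) / ((M + 1) * F * (R * (lam + 1 / 2 + M)))) *
      ((M + 1) * (lam + 1 / 2 + M)) =
    P * Q / (F * R) * (2 * (nu + lam)) * (-nu + M) * (nu + 2 * lam + M) := by
  have hD1 : (M + 1) * F * (R * (lam + 1 / 2 + M)) ≠ 0 :=
    mul_ne_zero (mul_ne_zero hm1 hF) (mul_ne_zero hR hRm)
  have hD2 : F * R ≠ 0 := mul_ne_zero hF hR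
  rw [show 2 * (nu + lam) * (P * (-nu + M) * (Q * (nu + 2 * lam + M)) / ((M + 1) * F * (R * (lam + 1 / 2 + M)))) *
      ((M + 1) * (lam + 1 / 2 + M))
      = (2 * (nu + lam) * (P * (-nu + M) * (Q * (nu + 2 * lam + M))) * ((M + 1) * (lam + 1 / 2 + M))) /
        ((M + 1) * F * (R * (lam + 1 / 2 + M))) from by ring,
    show P * Q / (F * R) * (2 * (nu + lam)) * (-nu + M) * (nu + 2 * lam + M)
      = (P * Q * (2 * (nu + lam)) * (-nu + M) * (nu + 2 * lam + M)) / (F * R) from by ring,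
    div_eq_div_iff hD1 hD2]
  ring

lemma algE3 (lam nu M P Q R F B : ℝ) (hR : R ≠ 0) (hF : F ≠ 0)
    (hm1 : M + 1 ≠ 0) (hRm : lam + 1 / 2 + M ≠ 0)
    (e5 : B * (-nu) = P * (-nu + M) * (-nu + M + 1)) :
    nu * (B * ((nu - 1 + 2 * lam) * Q) / ((M + 1) * F * (R * (lam + 1 / 2 + M)))) *
      ((M + 1) * (lam + 1 / 2 + M)) =
    P * Q / (F * R) * -(nu - 1 + 2 * lam) * (-nu + M) * (-nu + M + 1) := by
  have hD1 : (M + 1) * F * (R * (lam + 1 / 2 + M)) ≠ 0 :=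
    mul_ne_zero (mul_ne_zero hm1 hF) (mul_ne_zero hR hRm)
  have hD2 : F * R ≠ 0 := mul_ne_zero hF hR
  rw [show nu * (B * ((nu - 1 + 2 * lam) * Q) / ((M + 1) * F * (R * (lam + 1 / 2 + M)))) *
      ((M + 1) * (lam + 1 / 2 + M))
      = (nu * (B * ((nu - 1 + 2 * lam) * Q)) * ((M + 1) * (lam + 1 / 2 + M))) /
        ((M + 1) * F * (R * (lam + 1 / 2 + M))) from by ring,
    show P * Q / (F * R) * -(nu - 1 + 2 * lam) * (-nu + M) * (-nu + M + 1)
      = (P * Q * -(nu - 1 + 2 * lam) * (-nu + M) * (-nu + M + 1)) / (F * R) from by ring,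
    div_eq_div_iff hD1 hD2]
  linear_combination (-(nu - 1 + 2 * lam) * Q * ((M + 1) * (lam + 1 / 2 + M)) * F * R) * e5

lemma ggf_key (lam nu : ℝ) (hlam : -(1 / 2) < lam) (hnu : 1 ≤ nu) (m : ℕ) :
    (nu + 2 * lam) * ggfCoeff lam (nu + 1) (m + 1) - 2 * (nu + lam) * ggfCoeff lam nu (m + 1)
      + nu * ggfCoeff lam (nu - 1) (m + 1) = -(4 * (nu + lam)) * ggfCoeff lam nu m := by
  have hl : (0:ℝ) < lam + 1 / 2 := by linarith
  have hnu0 : nu ≠ 0 := by linarith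
  have hnl : nu + 2 * lam ≠ 0 := by intro h; linarith
  have hR : poch (lam + 1 / 2) m ≠ 0 := ne_of_gt (poch_pos hl m)
  have hRm : lam + 1 / 2 + (m:ℝ) ≠ 0 := by positivity
  have hF : ((m.factorial : ℝ)) ≠ 0 := Nat.cast_ne_zero.mpr m.factorial_ne_zero
  have hm1 : ((m:ℝ) + 1) ≠ 0 := by positivity
  have e1 : poch (-(nu + 1)) (m + 1) = -(nu + 1) * poch (-nu) m := by
    rw [poch_succ', show -(nu + 1) + 1 = -nu by ring]
  have e2 : poch (nu + 1 + 2 * lam) (m + 1) * (nu + 2 * lam)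
      = poch (nu + 2 * lam) m * (nu + 2 * lam + m) * (nu + 2 * lam + m + 1) := by
    have a1 : poch (nu + 2 * lam) (m + 2) = (nu + 2 * lam) * poch (nu + 1 + 2 * lam) (m + 1) := by
      rw [poch_succ', show nu + 2 * lam + 1 = nu + 1 + 2 * lam by ring]
    have a2 : poch (nu + 2 * lam) (m + 2)
        = poch (nu + 2 * lam) m * (nu + 2 * lam + m) * (nu + 2 * lam + m + 1) := by
      rw [show m + 2 = (m + 1) + 1 from rfl, poch_succ, poch_succ]; push_cast; ring
    linear_combination a2 - a1
  have e3 : poch (-nu) (m + 1) = poch (-nu) m * (-nu + m) := poch_succ _ _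
  have e4 : poch (nu + 2 * lam) (m + 1) = poch (nu + 2 * lam) m * (nu + 2 * lam + m) :=
    poch_succ _ _
  have e5 : poch (-(nu - 1)) (m + 1) * (-nu)
      = poch (-nu) m * (-nu + m) * (-nu + m + 1) := by
    have a1 : poch (-nu) (m + 2) = (-nu) * poch (-(nu - 1)) (m + 1) := by
      rw [poch_succ', show -nu + 1 = -(nu - 1) by ring]
    have a2 : poch (-nu) (m + 2) = poch (-nu) m * (-nu + m) * (-nu + m + 1) := by
      rw [show m + 2 = (m + 1) + 1 from rfl, poch_succ, poch_succ]; push_cast; ring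
    linear_combination a2 - a1
  have e6 : poch (nu - 1 + 2 * lam) (m + 1) = (nu - 1 + 2 * lam) * poch (nu + 2 * lam) m := by
    rw [poch_succ', show nu - 1 + 2 * lam + 1 = nu + 2 * lam by ring]
  have e7 : poch (lam + 1 / 2) (m + 1) = poch (lam + 1 / 2) m * (lam + 1 / 2 + m) :=
    poch_succ _ _
  have e8 : (((m + 1).factorial : ℝ)) = ((m:ℝ) + 1) * (m.factorial : ℝ) := by
    rw [Nat.factorial_succ]; push_cast; ring
  have hD : ((m:ℝ) + 1) * (lam + 1 / 2 + m) ≠ 0 := mul_ne_zero hm1 hRm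
  have E1 : (nu + 2 * lam) * ggfCoeff lam (nu + 1) (m + 1) * (((m:ℝ) + 1) * (lam + 1 / 2 + m))
      = ggfCoeff lam nu m * (-(nu + 1)) * (nu + 2 * lam + m) * (nu + 2 * lam + m + 1) := by
    unfold ggfCoeff
    rw [e1, e7, e8]
    exact algE1 lam nu m (poch (-nu) m) (poch (nu + 2 * lam) m) (poch (lam + 1 / 2) m)
      (m.factorial : ℝ) (poch (nu + 1 + 2 * lam) (m + 1)) hnl hR hF hm1 hRm e2
  have E2 : 2 * (nu + lam) * ggfCoeff lam nu (m + 1) * (((m:ℝ) + 1) * (lam + 1 / 2 + m))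
      = ggfCoeff lam nu m * (2 * (nu + lam)) * (-nu + m) * (nu + 2 * lam + m) := by
    unfold ggfCoeff
    rw [e3, e4, e7, e8]
    exact algE2 lam nu m (poch (-nu) m) (poch (nu + 2 * lam) m) (poch (lam + 1 / 2) m)
      (m.factorial : ℝ) hR hF hm1 hRm
  have E3 : nu * ggfCoeff lam (nu - 1) (m + 1) * (((m:ℝ) + 1) * (lam + 1 / 2 + m))
      = ggfCoeff lam nu m * (-(nu - 1 + 2 * lam)) * (-nu + m) * (-nu + m + 1) := by
    unfold ggfCoeff
    rw [e6, e7, e8]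
    exact algE3 lam nu m (poch (-nu) m) (poch (nu + 2 * lam) m) (poch (lam + 1 / 2) m)
      (m.factorial : ℝ) (poch (-(nu - 1)) (m + 1)) hR hF hm1 hRm e5
  apply mul_right_cancel₀ hD
  linear_combination E1 - E2 + E3

lemma ggf_ratio (lam mu t : ℝ) (hlam : -(1 / 2) < lam) (j : ℕ) :
    ggfCoeff lam mu (j + 1) * t ^ (j + 1)
      = (ggfCoeff lam mu j * t ^ j) *
        (((j:ℝ) - mu) * ((j:ℝ) + mu + 2 * lam) * t / (((j:ℝ) + 1) * ((j:ℝ) + lam + 1 / 2))) := by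
  have hl : (0:ℝ) < lam + 1 / 2 := by linarith
  have hR : poch (lam + 1 / 2) j ≠ 0 := ne_of_gt (poch_pos hl j)
  have hF : ((j.factorial : ℝ)) ≠ 0 := Nat.cast_ne_zero.mpr j.factorial_ne_zero
  have hm1 : ((j:ℝ) + 1) ≠ 0 := by positivity
  have hRm : (j:ℝ) + lam + 1 / 2 ≠ 0 := by
    have : (0:ℝ) ≤ (j:ℝ) := Nat.cast_nonneg j
    intro h; nlinarith
  unfold ggfCoeff
  rw [poch_succ, poch_succ, poch_succ, Nat.factorial_succ]
  push_cast
  rw [pow_succ]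
  field_simp
  ring

lemma ggf_summable (lam mu t : ℝ) (hlam : -(1 / 2) < lam) (ht0 : 0 ≤ t) (ht1 : t < 1) :
    Summable (fun j : ℕ => ggfCoeff lam mu j * t ^ j) := by
  set r : ℝ := (1 + t) / 2 with hrdef
  have htr : t < r := by rw [hrdef]; linarith
  have hr1 : r < 1 := by rw [hrdef]; linarith
  apply summable_of_ratio_norm_eventually_le hr1
  have hq : Filter.Tendsto
      (fun j : ℕ => ((j:ℝ) - mu) * ((j:ℝ) + mu + 2 * lam) * t / (((j:ℝ) + 1) * ((j:ℝ) + lam + 1 / 2)))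
      Filter.atTop (nhds t) := by
    have hd1 : Filter.Tendsto (fun j : ℕ => ((j:ℝ) + 1)) Filter.atTop Filter.atTop :=
      Filter.tendsto_atTop_add_const_right _ 1 tendsto_natCast_atTop_atTop
    have hd2 : Filter.Tendsto (fun j : ℕ => ((j:ℝ) + lam + 1 / 2)) Filter.atTop Filter.atTop := by
      have := Filter.tendsto_atTop_add_const_right Filter.atTop (lam + 1 / 2) tendsto_natCast_atTop_atTop
      refine this.congr (fun j => by ring)
    have h1 : Filter.Tendsto (fun j : ℕ => ((j:ℝ) - mu) / ((j:ℝ) + 1)) Filter.atTop (nhds 1) := by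
      have hb : Filter.Tendsto (fun j : ℕ => (-(mu + 1)) / ((j:ℝ) + 1)) Filter.atTop (nhds 0) :=
        Filter.Tendsto.div_atTop tendsto_const_nhds hd1
      have := (tendsto_const_nhds (x := (1:ℝ)) (f := Filter.atTop (α := ℕ))).add hb
      rw [add_zero] at this
      refine this.congr (fun j => ?_)
      have hne : ((j:ℝ) + 1) ≠ 0 := by positivity
      rw [eq_div_iff hne, add_mul, one_mul, div_mul_cancel₀ _ hne]
      ring
    have h2 : Filter.Tendsto (fun j : ℕ => ((j:ℝ) + mu + 2 * lam) / ((j:ℝ) + lam + 1 / 2))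
        Filter.atTop (nhds 1) := by
      have hb : Filter.Tendsto (fun j : ℕ => (mu + 2 * lam - lam - 1 / 2) / ((j:ℝ) + lam + 1 / 2))
          Filter.atTop (nhds 0) :=
        Filter.Tendsto.div_atTop tendsto_const_nhds hd2
      have := (tendsto_const_nhds (x := (1:ℝ)) (f := Filter.atTop (α := ℕ))).add hb
      rw [add_zero] at this
      refine this.congr (fun j => ?_)
      have hne : ((j:ℝ) + lam + 1 / 2) ≠ 0 := by
        have : (0:ℝ) ≤ (j:ℝ) := Nat.cast_nonneg j
        intro h; nlinarith
      rw [eq_div_iff hne, add_mul, one_mul, div_mul_cancel₀ _ hne]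
      ring
    have := ((h1.mul h2).mul_const t)
    rw [one_mul, one_mul] at this
    refine this.congr (fun j => ?_)
    rw [div_mul_div_comm]
    ring
  have hev1 : ∀ᶠ j : ℕ in Filter.atTop,
      ((j:ℝ) - mu) * ((j:ℝ) + mu + 2 * lam) * t / (((j:ℝ) + 1) * ((j:ℝ) + lam + 1 / 2)) < r :=
    hq.eventually_lt_const htr
  have hev2 : ∀ᶠ j : ℕ in Filter.atTop, mu ≤ (j:ℝ) :=
    (tendsto_natCast_atTop_atTop (R := ℝ)).eventually_ge_atTop mu
  have hev3 : ∀ᶠ j : ℕ in Filter.atTop, -(mu + 2 * lam) ≤ (j:ℝ) :=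
    (tendsto_natCast_atTop_atTop (R := ℝ)).eventually_ge_atTop (-(mu + 2 * lam))
  filter_upwards [hev1, hev2, hev3] with j h1 h2 h3
  have hl : (0:ℝ) < lam + 1 / 2 := by linarith
  have hq0 : 0 ≤ ((j:ℝ) - mu) * ((j:ℝ) + mu + 2 * lam) * t / (((j:ℝ) + 1) * ((j:ℝ) + lam + 1 / 2)) := by
    apply div_nonneg
    · apply mul_nonneg (mul_nonneg (by linarith) (by linarith)) ht0
    · have hj0 : (0:ℝ) ≤ (j:ℝ) := Nat.cast_nonneg j
      apply mul_nonneg (by linarith) (by linarith)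
  rw [ggf_ratio lam mu t hlam j, norm_mul]
  calc ‖ggfCoeff lam mu j * t ^ j‖ *
        ‖((j:ℝ) - mu) * ((j:ℝ) + mu + 2 * lam) * t / (((j:ℝ) + 1) * ((j:ℝ) + lam + 1 / 2))‖
      ≤ ‖ggfCoeff lam mu j * t ^ j‖ * r := by
        apply mul_le_mul_of_nonneg_left _ (norm_nonneg _)
        rw [Real.norm_of_nonneg hq0]
        exact le_of_lt h1
    _ = r * ‖ggfCoeff lam mu j * t ^ j‖ := mul_comm _ _

lemma ggfCoeff_zero (lam mu : ℝ) : ggfCoeff lam mu 0 = 1 := by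
  simp [ggfCoeff, poch]

/-- Three-term recurrence for the GGF-Fs. -/
theorem ggf_three_term_recurrence (lam nu : ℝ) (hlam : -(1 / 2) < lam) (hnu : 1 ≤ nu)
    (x : ℝ) (hx : x ∈ Set.Ioc (-1 : ℝ) 1) :
    (nu + 2 * lam) * rG lam (nu + 1) x =
      2 * (nu + lam) * x * rG lam nu x - nu * rG lam (nu - 1) x := by
  obtain ⟨hx1, hx2⟩ := hx
  set t : ℝ := (1 - x) / 2 with htdef
  have ht0 : 0 ≤ t := by rw [htdef]; linarith
  have ht1 : t < 1 := by rw [htdef]; linarith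
  have hxt : x = 1 - 2 * t := by rw [htdef]; ring
  have hrG : ∀ mu : ℝ, rG lam mu x = ∑' j : ℕ, ggfCoeff lam mu j * t ^ j := fun mu => rfl
  have S1 := ggf_summable lam (nu + 1) t hlam ht0 ht1
  have S2 := ggf_summable lam nu t hlam ht0 ht1
  have S3 := ggf_summable lam (nu - 1) t hlam ht0 ht1
  -- the combined series
  set G : ℕ → ℝ := fun j =>
    ((nu + 2 * lam) * ggfCoeff lam (nu + 1) j - 2 * (nu + lam) * ggfCoeff lam nu j
      + nu * ggfCoeff lam (nu - 1) j) * t ^ j with hGdef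
  have hGeq : ∀ j, G j = ((nu + 2 * lam) * (ggfCoeff lam (nu + 1) j * t ^ j)
      - 2 * (nu + lam) * (ggfCoeff lam nu j * t ^ j))
      + nu * (ggfCoeff lam (nu - 1) j * t ^ j) := by
    intro j; rw [hGdef]; ring
  have SG : Summable G := by
    refine Summable.congr (f := fun j => ((nu + 2 * lam) * (ggfCoeff lam (nu + 1) j * t ^ j)
      - 2 * (nu + lam) * (ggfCoeff lam nu j * t ^ j))
      + nu * (ggfCoeff lam (nu - 1) j * t ^ j)) ?_ (fun j => (hGeq j).symm)
    exact ((S1.mul_left _).sub (S2.mul_left _)).add (S3.mul_left _)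
  have hGsum : ∑' j, G j = (nu + 2 * lam) * (∑' j, ggfCoeff lam (nu + 1) j * t ^ j)
      - 2 * (nu + lam) * (∑' j, ggfCoeff lam nu j * t ^ j)
      + nu * (∑' j, ggfCoeff lam (nu - 1) j * t ^ j) := by
    rw [tsum_congr hGeq,
      Summable.tsum_add ((S1.mul_left _).sub (S2.mul_left _)) (S3.mul_left _),
      Summable.tsum_sub (S1.mul_left _) (S2.mul_left _), tsum_mul_left, tsum_mul_left, tsum_mul_left]
  have hGsum2 : ∑' j, G j = -(4 * (nu + lam)) * (t * ∑' j, ggfCoeff lam nu j * t ^ j) := by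
    rw [Summable.tsum_eq_zero_add SG]
    have h0 : G 0 = 0 := by
      rw [hGdef]
      simp only [ggfCoeff_zero, pow_zero]
      ring
    have hsucc : ∀ j : ℕ, G (j + 1) = -(4 * (nu + lam)) * (t * (ggfCoeff lam nu j * t ^ j)) := by
      intro j
      rw [hGdef]
      have := ggf_key lam nu hlam hnu j
      calc ((nu + 2 * lam) * ggfCoeff lam (nu + 1) (j + 1) - 2 * (nu + lam) * ggfCoeff lam nu (j + 1)
          + nu * ggfCoeff lam (nu - 1) (j + 1)) * t ^ (j + 1)
          = (-(4 * (nu + lam)) * ggfCoeff lam nu j) * t ^ (j + 1) := by rw [this]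
        _ = -(4 * (nu + lam)) * (t * (ggfCoeff lam nu j * t ^ j)) := by rw [pow_succ]; ring
    rw [h0, zero_add, tsum_congr hsucc, tsum_mul_left, tsum_mul_left]
  rw [hrG, hrG, hrG, hxt]
  linear_combination hGsum2 - hGsum
end

section
/- Let λ > −1/2 be real and let ν ≥ 0 be real. Then the function u(x) = ʳG_ν^{(λ)}(x) is twice differentiable on (−1,1) and satisfies the Sturm–Liouville differential equation (1−x²) u''(x) − (2λ+1) x u'(x) + ν(ν+2λ) u(x) = 0 for every x ∈ (−1,1). -/
open Real Filter

namespace GGF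

lemma poch_succ (a : ℝ) (n : ℕ) : poch a (n + 1) = poch a n * (a + n) :=
  Finset.prod_range_succ _ _

lemma poch_pos {a : ℝ} (ha : 0 < a) (n : ℕ) : 0 < poch a n := by
  induction n with
  | zero => simp [poch]
  | succ n ih =>
    rw [poch_succ]
    have h : (0:ℝ) ≤ n := n.cast_nonneg
    exact mul_pos ih (by linarith)

noncomputable def c (lam nu : ℝ) (j : ℕ) : ℝ :=
  poch (-nu) j * poch (nu + 2 * lam) j / ((j.factorial : ℝ) * poch (lam + 1 / 2) j)

noncomputable def q (lam nu : ℝ) (j : ℕ) : ℝ :=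
  (((j:ℝ) - nu) * ((j:ℝ) + nu + 2 * lam)) / (((j:ℝ) + 1) * ((j:ℝ) + lam + 1/2))

lemma c_succ {lam : ℝ} (nu : ℝ) (hlam : -(1/2) < lam) (j : ℕ) :
    c lam nu (j+1) = c lam nu j * q lam nu j := by
  have hp : 0 < poch (lam + 1/2) j := poch_pos (by linarith) j
  have hfac : ((j.factorial : ℕ) : ℝ) ≠ 0 := Nat.cast_ne_zero.2 j.factorial_ne_zero
  have hj1 : ((j:ℝ) + 1) ≠ 0 := by positivity
  have hcn : (0:ℝ) ≤ j := j.cast_nonneg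
  have hd : ((j:ℝ) + lam + 1/2) ≠ 0 := by intro h; linarith [hcn]
  unfold c q
  rw [poch_succ, poch_succ, poch_succ]
  push_cast [Nat.factorial_succ]
  field_simp
  ring

lemma q_tendsto {lam : ℝ} (nu : ℝ) (hlam : -(1/2) < lam) :
    Tendsto (fun j : ℕ => |q lam nu j|) atTop (nhds 1) := by
  have hA : Tendsto (fun j : ℕ => ((j:ℝ) + 1)) atTop atTop :=
    tendsto_atTop_add_const_right _ _ tendsto_natCast_atTop_atTop
  have hB : Tendsto (fun j : ℕ => ((j:ℝ) + lam + 1/2)) atTop atTop := by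
    have := tendsto_atTop_add_const_right atTop (lam + 1/2) tendsto_natCast_atTop_atTop
    convert this using 2 with j
    ring
  have h1 : Tendsto (fun j : ℕ => ((j:ℝ) - nu)/((j:ℝ)+1)) atTop (nhds 1) := by
    have hd : Tendsto (fun j : ℕ => (nu+1)/((j:ℝ)+1)) atTop (nhds 0) :=
      Tendsto.div_atTop tendsto_const_nhds hA
    have := tendsto_const_nhds (x := (1:ℝ)) (f := atTop (α := ℕ)) |>.sub hd
    rw [sub_zero] at this
    refine this.congr fun j => ?_
    have hj1 : ((j:ℝ) + 1) ≠ 0 := by positivity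
    rw [eq_div_iff hj1, sub_mul, div_mul_cancel₀ _ hj1]
    ring
  have h2 : Tendsto (fun j : ℕ => ((j:ℝ) + nu + 2*lam)/((j:ℝ)+lam+1/2)) atTop (nhds 1) := by
    have hd : Tendsto (fun j : ℕ => (nu + lam - 1/2)/((j:ℝ)+lam+1/2)) atTop (nhds 0) :=
      Tendsto.div_atTop tendsto_const_nhds hB
    have := tendsto_const_nhds (x := (1:ℝ)) (f := atTop (α := ℕ)) |>.add hd
    rw [add_zero] at this
    refine this.congr fun j => ?_
    have hcn : (0:ℝ) ≤ j := j.cast_nonneg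
    have hj1 : ((j:ℝ) + lam + 1/2) ≠ 0 := by intro h; linarith
    rw [eq_div_iff hj1, add_mul, div_mul_cancel₀ _ hj1]
    ring
  have hq : Tendsto (fun j : ℕ => q lam nu j) atTop (nhds 1) := by
    have := h1.mul h2
    rw [one_mul] at this
    refine this.congr fun j => ?_
    unfold q
    rw [div_mul_div_comm]
  simpa using hq.abs

lemma summable_master {lam : ℝ} (nu : ℝ) (hlam : -(1/2) < lam) (k : ℕ) {s : ℝ}
    (h0 : 0 ≤ s) (h1 : s < 1) :
    Summable (fun j : ℕ => |c lam nu j| * ((j:ℝ)+1)^k * s^j) := by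
  have hr1 : (1 + s)/2 < 1 := by linarith
  have hrs : s < (1 + s)/2 := by linarith
  apply summable_of_ratio_norm_eventually_le hr1
  have h2 : Tendsto (fun j : ℕ => ((j:ℝ)+2)/((j:ℝ)+1)) atTop (nhds 1) := by
    have hA : Tendsto (fun j : ℕ => ((j:ℝ) + 1)) atTop atTop :=
      tendsto_atTop_add_const_right _ _ tendsto_natCast_atTop_atTop
    have hd : Tendsto (fun j : ℕ => (1:ℝ)/((j:ℝ)+1)) atTop (nhds 0) :=
      Tendsto.div_atTop tendsto_const_nhds hA
    have := tendsto_const_nhds (x := (1:ℝ)) (f := atTop (α := ℕ)) |>.add hd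
    rw [add_zero] at this
    refine this.congr fun j => ?_
    have hj1 : ((j:ℝ) + 1) ≠ 0 := by positivity
    rw [eq_div_iff hj1, add_mul, div_mul_cancel₀ _ hj1]
    ring
  have hv : Tendsto (fun j : ℕ => |q lam nu j| * (((j:ℝ)+2)/((j:ℝ)+1))^k * s)
      atTop (nhds s) := by
    have := ((q_tendsto nu hlam).mul ((h2.pow k))).mul_const s
    simpa using this
  have hev : ∀ᶠ j in atTop, |q lam nu j| * (((j:ℝ)+2)/((j:ℝ)+1))^k * s ≤ (1+s)/2 :=
    hv.eventually (eventually_le_nhds hrs)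
  filter_upwards [hev] with j hj
  have hj1 : ((j:ℝ) + 1) ≠ 0 := by positivity
  have hnn : (0:ℝ) ≤ |c lam nu j| * ((j:ℝ)+1)^k * s^j := by positivity
  calc ‖|c lam nu (j+1)| * (((j+1:ℕ):ℝ)+1)^k * s^(j+1)‖
      = |c lam nu j| * |q lam nu j| * ((j:ℝ)+2)^k * s^(j+1) := by
        rw [Real.norm_eq_abs, abs_of_nonneg (by positivity), c_succ nu hlam, abs_mul]
        push_cast
        ring
    _ = (|q lam nu j| * (((j:ℝ)+2)/((j:ℝ)+1))^k * s) * (|c lam nu j| * ((j:ℝ)+1)^k * s^j) := by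
        rw [div_pow]
        field_simp
        ring
    _ ≤ ((1+s)/2) * (|c lam nu j| * ((j:ℝ)+1)^k * s^j) := by
        exact mul_le_mul_of_nonneg_right hj hnn
    _ = ((1+s)/2) * ‖|c lam nu j| * ((j:ℝ)+1)^k * s^j‖ := by
        rw [Real.norm_eq_abs, abs_of_nonneg hnn]

lemma summable_of_bound {lam : ℝ} (nu : ℝ) (hlam : -(1/2) < lam) (k : ℕ) {s : ℝ}
    (h0 : 0 ≤ s) (h1 : s < 1) {F : ℕ → ℝ} (C : ℝ)
    (hF : ∀ j, ‖F j‖ ≤ C * (|c lam nu j| * ((j:ℝ)+1)^k * s^j)) : Summable F :=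
  Summable.of_norm_bounded ((summable_master nu hlam k h0 h1).mul_left C) hF

lemma pow_sub_le {s : ℝ} (h0 : 0 < s) (h1 : s ≤ 1) (j m : ℕ) :
    s^(j-m) ≤ s^j / s^m := by
  rw [le_div_iff₀ (pow_pos h0 m), ← pow_add]
  exact pow_le_pow_of_le_one h0.le h1 le_tsub_add

lemma hasDerivAt_pow_term (K : ℝ) (m : ℕ) (x : ℝ) :
    HasDerivAt (fun y => K * ((1-y)/2)^m)
      (K * ((m:ℝ) * ((1-x)/2)^(m-1) * (-(1/2)))) x := by
  have h : HasDerivAt (fun y : ℝ => (1-y)/2) (-(1/2)) x := by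
    have := ((hasDerivAt_id x).const_sub 1).div_const 2
    exact this.congr_deriv (by norm_num)
  exact (h.pow m).const_mul K

noncomputable def G (lam nu : ℝ) (j : ℕ) (x : ℝ) : ℝ :=
  c lam nu j * ((j:ℝ) * ((1-x)/2)^(j-1) * (-(1/2)))

noncomputable def H (lam nu : ℝ) (j : ℕ) (x : ℝ) : ℝ :=
  (c lam nu j * ((j:ℝ) * (-(1/2)))) * ((((j-1:ℕ)):ℝ) * ((1-x)/2)^(j-1-1) * (-(1/2)))

lemma hasDerivAt_F (lam nu : ℝ) (j : ℕ) (x : ℝ) :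
    HasDerivAt (fun y => c lam nu j * ((1-y)/2)^j) (G lam nu j x) x :=
  hasDerivAt_pow_term _ _ _

lemma G_eq (lam nu : ℝ) (j : ℕ) :
    G lam nu j = fun x => (c lam nu j * ((j:ℝ) * (-(1/2)))) * ((1-x)/2)^(j-1) := by
  funext x
  unfold G
  ring

lemma hasDerivAt_G (lam nu : ℝ) (j : ℕ) (x : ℝ) :
    HasDerivAt (G lam nu j) (H lam nu j x) x := by
  rw [G_eq]
  exact hasDerivAt_pow_term _ _ _

lemma norm_F_le (lam nu : ℝ) {s y : ℝ} (h0 : 0 < s) (h1 : s ≤ 1)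
    (hy : |(1-y)/2| ≤ s) (j : ℕ) :
    ‖c lam nu j * ((1-y)/2)^j‖ ≤ 1 * (|c lam nu j| * ((j:ℝ)+1)^0 * s^j) := by
  rw [Real.norm_eq_abs, abs_mul, abs_pow, pow_zero, one_mul, mul_one]
  gcongr

lemma norm_G_le (lam nu : ℝ) {s y : ℝ} (h0 : 0 < s) (h1 : s ≤ 1)
    (hy : |(1-y)/2| ≤ s) (j : ℕ) :
    ‖G lam nu j y‖ ≤ (1/(2*s)) * (|c lam nu j| * ((j:ℝ)+1)^1 * s^j) := by
  have h2 : |(1-y)/2|^(j-1) ≤ s^(j-1) := pow_le_pow_left₀ (abs_nonneg _) hy _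
  have h3 : s^(j-1) ≤ s^j / s := by simpa using pow_sub_le h0 h1 j 1
  have hG : ‖G lam nu j y‖ = |c lam nu j| * ((j:ℝ) * |(1-y)/2|^(j-1) * (1/2)) := by
    unfold G
    rw [Real.norm_eq_abs, abs_mul, abs_mul, abs_mul, abs_pow, Nat.abs_cast]
    norm_num
  rw [hG]
  calc |c lam nu j| * ((j:ℝ) * |(1-y)/2|^(j-1) * (1/2))
      ≤ |c lam nu j| * (((j:ℝ)+1) * (s^j/s) * (1/2)) := by
        gcongr
        · linarith
        · exact h2.trans h3
    _ = (1/(2*s)) * (|c lam nu j| * ((j:ℝ)+1)^1 * s^j) := by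
        field_simp

lemma norm_H_le (lam nu : ℝ) {s y : ℝ} (h0 : 0 < s) (h1 : s ≤ 1)
    (hy : |(1-y)/2| ≤ s) (j : ℕ) :
    ‖H lam nu j y‖ ≤ (1/(4*s^2)) * (|c lam nu j| * ((j:ℝ)+1)^2 * s^j) := by
  have h2 : |(1-y)/2|^(j-1-1) ≤ s^(j-1-1) := pow_le_pow_left₀ (abs_nonneg _) hy _
  have h3 : s^(j-1-1) ≤ s^j / s^2 := by
    rw [Nat.sub_sub]
    exact pow_sub_le h0 h1 j 2
  have hjm : (((j-1:ℕ)):ℝ) ≤ (j:ℝ) + 1 := by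
    have := Nat.sub_le j 1
    have h := Nat.cast_le (α := ℝ) |>.mpr this
    linarith
  have hH : ‖H lam nu j y‖
      = |c lam nu j| * ((j:ℝ) * (1/2)) * ((((j-1:ℕ)):ℝ) * |(1-y)/2|^(j-1-1) * (1/2)) := by
    unfold H
    rw [Real.norm_eq_abs, abs_mul, abs_mul, abs_mul, abs_mul, abs_mul, abs_pow,
      Nat.abs_cast, Nat.abs_cast]
    norm_num [abs_of_pos]
  rw [hH]
  calc |c lam nu j| * ((j:ℝ) * (1/2)) * ((((j-1:ℕ)):ℝ) * |(1-y)/2|^(j-1-1) * (1/2))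
      ≤ |c lam nu j| * (((j:ℝ)+1) * (1/2)) * ((((j:ℝ)+1)) * (s^j/s^2) * (1/2)) := by
        gcongr
        · linarith
        · exact h2.trans h3
    _ = (1/(4*s^2)) * (|c lam nu j| * ((j:ℝ)+1)^2 * s^j) := by
        field_simp
        ring


lemma key {lam : ℝ} (nu : ℝ) (hlam : -(1/2) < lam) {x : ℝ} (hx : x ∈ Set.Ioo (-1:ℝ) 1) :
    HasDerivAt (rG lam nu) (∑' j, G lam nu j x) x ∧
    (deriv (rG lam nu) =ᶠ[nhds x] fun y => ∑' j, G lam nu j y) ∧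
    HasDerivAt (fun y => ∑' j, G lam nu j y) (∑' j, H lam nu j x) x := by
  obtain ⟨hx1, hx2⟩ := hx
  have hxabs : |x| < 1 := abs_lt.mpr ⟨hx1, hx2⟩
  have hax : (0:ℝ) ≤ |x| := abs_nonneg x
  set r : ℝ := (1 + |x|)/2 with hr
  have hxr : |x| < r := by rw [hr]; linarith
  have hr1 : r < 1 := by rw [hr]; linarith
  have hr0 : (0:ℝ) < r := by rw [hr]; linarith
  set s : ℝ := (1 + r)/2 with hs
  have hs0 : (0:ℝ) < s := by rw [hs]; linarith
  have hs1 : s < 1 := by rw [hs]; linarith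
  have hsub : ∀ y ∈ Set.Ioo (-r) r, |(1-y)/2| ≤ s := by
    intro y hy
    obtain ⟨h1, h2⟩ := hy
    rw [abs_le]
    constructor <;> [linarith; linarith]
  have hxmem : x ∈ Set.Ioo (-r) r := by
    constructor
    · linarith [neg_abs_le x]
    · linarith [le_abs_self x]
  have hopen : IsOpen (Set.Ioo (-r) r) := isOpen_Ioo
  have hpre : IsPreconnected (Set.Ioo (-r) r) := (convex_Ioo (-r) r).isPreconnected
  have hsumF : Summable (fun j => c lam nu j * ((1-x)/2)^j) :=
    summable_of_bound nu hlam 0 hs0.le hs1 1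
      (fun j => norm_F_le lam nu hs0 hs1.le (hsub x hxmem) j)
  have hG : ∀ y ∈ Set.Ioo (-r) r,
      HasDerivAt (fun z => ∑' j, c lam nu j * ((1-z)/2)^j) (∑' j, G lam nu j y) y := by
    intro y hy
    exact hasDerivAt_tsum_of_isPreconnected
      ((summable_master nu hlam 1 hs0.le hs1).mul_left (1/(2*s))) hopen hpre
      (fun j z _ => hasDerivAt_F lam nu j z)
      (fun j z hz => norm_G_le lam nu hs0 hs1.le (hsub z hz) j)
      hxmem hsumF hy
  have hrGeq : rG lam nu = fun z => ∑' j, c lam nu j * ((1-z)/2)^j := rfl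
  have hd1 : HasDerivAt (rG lam nu) (∑' j, G lam nu j x) x := by
    rw [hrGeq]; exact hG x hxmem
  have hev : deriv (rG lam nu) =ᶠ[nhds x] fun y => ∑' j, G lam nu j y := by
    filter_upwards [hopen.mem_nhds hxmem] with y hy
    rw [hrGeq]
    exact (hG y hy).deriv
  have hsumG : Summable (fun j => G lam nu j x) :=
    summable_of_bound nu hlam 1 hs0.le hs1 (1/(2*s))
      (fun j => norm_G_le lam nu hs0 hs1.le (hsub x hxmem) j)
  have hH : HasDerivAt (fun y => ∑' j, G lam nu j y) (∑' j, H lam nu j x) x :=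
    hasDerivAt_tsum_of_isPreconnected
      ((summable_master nu hlam 2 hs0.le hs1).mul_left (1/(4*s^2))) hopen hpre
      (fun j z _ => hasDerivAt_G lam nu j z)
      (fun j z hz => norm_H_le lam nu hs0 hs1.le (hsub z hz) j)
      hxmem hsumG hxmem
  exact ⟨hd1, hev, hH⟩

lemma A_succ {lam : ℝ} (nu : ℝ) (hlam : -(1/2) < lam) (j : ℕ) (t : ℝ) :
    c lam nu (j+1) * ((((j+1:ℕ)):ℝ) * (((j+1:ℕ):ℝ) + lam - 1/2)) * t^((j+1)-1)
      = c lam nu j * (((j:ℝ) - nu) * ((j:ℝ) + nu + 2*lam)) * t^j := by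
  rw [c_succ nu hlam]
  have hj1 : ((j:ℝ)+1) ≠ 0 := by positivity
  have hcn : (0:ℝ) ≤ j := j.cast_nonneg
  have hd : ((j:ℝ) + lam + 1/2) ≠ 0 := by intro h; linarith
  have hq : q lam nu j * ((((j:ℝ)+1)) * (((j:ℝ)+1) + lam - 1/2)) 
      = ((j:ℝ) - nu) * ((j:ℝ) + nu + 2*lam) := by
    unfold q
    rw [div_mul_eq_mul_div, div_eq_iff (mul_ne_zero hj1 hd)]
    ring
  rw [Nat.add_sub_cancel]
  push_cast
  linear_combination c lam nu j * t^j * hq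

lemma E_eq (lam nu : ℝ) (j : ℕ) (x : ℝ) :
    (1-x^2) * H lam nu j x - (2*lam+1)*x* G lam nu j x
      + nu*(nu+2*lam)*(c lam nu j * ((1-x)/2)^j)
    = c lam nu j * ((j:ℝ) * (((j:ℝ)) + lam - 1/2)) * ((1-x)/2)^(j-1)
      - c lam nu j * (((j:ℝ) - nu) * ((j:ℝ) + nu + 2*lam)) * ((1-x)/2)^j := by
  unfold G H
  match j with
  | 0 => norm_num; ring
  | 1 => norm_num; ring
  | (n+2) =>
    simp only [Nat.add_sub_cancel, Nat.succ_sub_one]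
    push_cast
    have hp : ∀ m : ℕ, ((1-x)/2)^(m+1) = ((1-x)/2)^m * ((1-x)/2) := fun m => pow_succ _ _
    rw [hp (n+1), hp n]
    ring

end GGF

open GGF in
/-- The GGF-F is twice differentiable on `(−1,1)` and satisfies the
Sturm–Liouville equation
`(1−x²) u'' − (2λ+1) x u' + ν(ν+2λ) u = 0`. -/
theorem ggf_sturm_liouville (lam nu : ℝ) (hlam : -(1 / 2) < lam) (hnu : 0 ≤ nu) :
    (∀ x ∈ Set.Ioo (-1 : ℝ) 1,
        DifferentiableAt ℝ (rG lam nu) x ∧ DifferentiableAt ℝ (deriv (rG lam nu)) x) ∧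
      ∀ x ∈ Set.Ioo (-1 : ℝ) 1,
        (1 - x ^ 2) * deriv (deriv (rG lam nu)) x -
            (2 * lam + 1) * x * deriv (rG lam nu) x +
            nu * (nu + 2 * lam) * rG lam nu x = 0 := by
  constructor
  · intro x hx
    obtain ⟨hd1, hev, hH⟩ := key nu hlam hx
    exact ⟨hd1.differentiableAt, (hev.differentiableAt_iff).mpr hH.differentiableAt⟩
  · intro x hx
    obtain ⟨hd1, hev, hH⟩ := key nu hlam hx
    have h1 : deriv (rG lam nu) x = ∑' j, G lam nu j x := hd1.deriv
    have h2 : deriv (deriv (rG lam nu)) x = ∑' j, H lam nu j x := by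
      rw [hev.deriv_eq]; exact hH.deriv
    have h0 : rG lam nu x = ∑' j, c lam nu j * ((1-x)/2)^j := rfl
    rw [h0, h1, h2]
    obtain ⟨hx1, hx2⟩ := hx
    have ht0 : (0:ℝ) < (1-x)/2 := by linarith
    have ht1 : (1-x)/2 < 1 := by linarith
    have habs : |(1-x)/2| ≤ (1-x)/2 := le_of_eq (abs_of_pos ht0)
    have sF : Summable (fun j => c lam nu j * ((1-x)/2)^j) :=
      summable_of_bound nu hlam 0 ht0.le ht1 1
        (fun j => norm_F_le lam nu ht0 ht1.le habs j)
    have sG : Summable (fun j => G lam nu j x) :=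
      summable_of_bound nu hlam 1 ht0.le ht1 (1/(2*((1-x)/2)))
        (fun j => norm_G_le lam nu ht0 ht1.le habs j)
    have sH : Summable (fun j => H lam nu j x) :=
      summable_of_bound nu hlam 2 ht0.le ht1 (1/(4*((1-x)/2)^2))
        (fun j => norm_H_le lam nu ht0 ht1.le habs j)
    have hpow1 : ∀ j : ℕ, ((1-x)/2)^(j-1) ≤ ((1-x)/2)^j / ((1-x)/2) := by
      intro j
      simpa using pow_sub_le ht0 ht1.le j 1
    have sA : Summable (fun j : ℕ =>
        c lam nu j * ((j:ℝ) * ((j:ℝ) + lam - 1/2)) * ((1-x)/2)^(j-1)) := by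
      apply summable_of_bound nu hlam 2 ht0.le ht1 ((|lam|+1)/((1-x)/2))
      intro j
      have hcn : (0:ℝ) ≤ j := j.cast_nonneg
      have e1 : |(j:ℝ) + lam - 1/2| ≤ ((j:ℝ)+1)*(|lam|+1) := by
        have h : (j:ℝ) + lam - 1/2 = (j:ℝ) + (lam - 1/2) := by ring
        rw [h]
        have h2 := abs_add_le (j:ℝ) (lam - 1/2)
        have h3 := abs_sub lam (1/2)
        have h4 : |(1:ℝ)/2| = 1/2 := by norm_num
        have h5 : (0:ℝ) ≤ |lam| := abs_nonneg lam
        rw [Nat.abs_cast] at h2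
        nlinarith
      rw [Real.norm_eq_abs, abs_mul, abs_mul, abs_pow, abs_of_pos ht0,
        abs_mul, Nat.abs_cast]
      calc |c lam nu j| * ((j:ℝ) * |(j:ℝ) + lam - 1/2|) * ((1-x)/2)^(j-1)
          ≤ |c lam nu j| * (((j:ℝ)+1) * (((j:ℝ)+1)*(|lam|+1))) * (((1-x)/2)^j / ((1-x)/2)) := by
            gcongr
            · linarith
            · exact hpow1 j
        _ = ((|lam|+1)/((1-x)/2)) * (|c lam nu j| * ((j:ℝ)+1)^2 * ((1-x)/2)^j) := by
            field_simp
    have sB : Summable (fun j : ℕ =>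
        c lam nu j * (((j:ℝ) - nu) * ((j:ℝ) + nu + 2*lam)) * ((1-x)/2)^j) := by
      apply summable_of_bound nu hlam 2 ht0.le ht1 ((nu+1)*(nu+2*|lam|+1))
      intro j
      have hcn : (0:ℝ) ≤ j := j.cast_nonneg
      have h5 : (0:ℝ) ≤ |lam| := abs_nonneg lam
      have e1 : |(j:ℝ) - nu| ≤ ((j:ℝ)+1)*(nu+1) := by
        have h3 := abs_sub (j:ℝ) nu
        rw [Nat.abs_cast, abs_of_nonneg hnu] at h3
        nlinarith
      have e2 : |(j:ℝ) + nu + 2*lam| ≤ ((j:ℝ)+1)*(nu+2*|lam|+1) := by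
        have h2 := abs_add_le ((j:ℝ) + nu) (2*lam)
        have h3 := abs_add_le (j:ℝ) nu
        rw [Nat.abs_cast, abs_of_nonneg hnu] at h3
        have h4 : |2*lam| = 2*|lam| := by rw [abs_mul]; norm_num
        rw [h4] at h2
        nlinarith
      rw [Real.norm_eq_abs, abs_mul, abs_mul, abs_mul, abs_pow, abs_of_pos ht0]
      calc |c lam nu j| * (|(j:ℝ) - nu| * |(j:ℝ) + nu + 2*lam|) * ((1-x)/2)^j
          ≤ |c lam nu j| * ((((j:ℝ)+1)*(nu+1)) * (((j:ℝ)+1)*(nu+2*|lam|+1))) * ((1-x)/2)^j := by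
            gcongr
        _ = ((nu+1)*(nu+2*|lam|+1)) * (|c lam nu j| * ((j:ℝ)+1)^2 * ((1-x)/2)^j) := by
            ring
    rw [← tsum_mul_left, ← tsum_mul_left, ← tsum_mul_left,
      ← Summable.tsum_sub (sH.mul_left _) (sG.mul_left _),
      ← Summable.tsum_add (Summable.sub (sH.mul_left _) (sG.mul_left _)) (sF.mul_left _)]
    rw [tsum_congr (fun j => E_eq lam nu j x), Summable.tsum_sub sA sB, sub_eq_zero,
      Summable.tsum_eq_zero_add sA]
    simp only [Nat.cast_zero, zero_mul, mul_zero, zero_add]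
    exact tsum_congr (fun j => A_succ nu hlam j ((1-x)/2))
end

section
/- For every φ ∈ (0,π) and every t > 0, (t²/4) cos²φ · (cosh(t/2))^{4/3} + sin²φ · (cosh t)^{2/3} < |g(φ,t)|² < (t²/4) cos²φ · (cosh(t/2))⁴ + sin²φ · (cosh t)², where |g(φ,t)|² = (cos²φ (cosh t − 1)² + sin²φ sinh²t)/t². -/
open Real

lemma key1 (x : ℝ) (hx : 0 < x) : Real.sinh x < x * Real.cosh x := by
  have hmono : StrictMonoOn (fun y : ℝ => y * Real.cosh y - Real.sinh y) (Set.Ici 0) := by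
    apply strictMonoOn_of_deriv_pos (convex_Ici 0)
    · exact ((continuous_id.mul Real.continuous_cosh).sub Real.continuous_sinh).continuousOn
    · intro y hy
      rw [interior_Ici] at hy
      have hd : HasDerivAt (fun y : ℝ => y * Real.cosh y - Real.sinh y)
          (1 * Real.cosh y + y * Real.sinh y - Real.cosh y) y :=
        ((hasDerivAt_id y).mul (Real.hasDerivAt_cosh y)).sub (Real.hasDerivAt_sinh y)
      rw [hd.deriv]
      have hy' : 0 < y := Set.mem_Ioi.mp hy
      have := Real.sinh_pos_iff.mpr hy'
      nlinarith [mul_pos hy' this]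
  have h := hmono (Set.self_mem_Ici) (Set.mem_Ici.mpr hx.le) hx
  simp at h
  linarith

lemma key2 (x : ℝ) (hx : 0 < x) : x * Real.cosh x ^ ((1:ℝ)/3) < Real.sinh x := by
  set p : ℝ := -(1/3) with hp
  have hmono : StrictMonoOn (fun y : ℝ => Real.sinh y * Real.cosh y ^ p - y) (Set.Ici 0) := by
    apply strictMonoOn_of_deriv_pos (convex_Ici 0)
    · exact ((Real.continuous_sinh.mul (Real.continuous_cosh.rpow_const
        (fun y => Or.inl (Real.cosh_pos y).ne'))).sub continuous_id).continuousOn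
    · intro y hy
      rw [interior_Ici] at hy
      have hd : HasDerivAt (fun y : ℝ => Real.sinh y * Real.cosh y ^ p - y)
          (Real.cosh y * Real.cosh y ^ p +
            Real.sinh y * (Real.sinh y * p * Real.cosh y ^ (p - 1)) - 1) y :=
        ((Real.hasDerivAt_sinh y).mul ((Real.hasDerivAt_cosh y).rpow_const
          (Or.inl (Real.cosh_pos y).ne'))).sub (hasDerivAt_id y)
      rw [hd.deriv]
      have hc0 : (0:ℝ) < Real.cosh y := Real.cosh_pos y
      set r : ℝ := Real.cosh y ^ ((1:ℝ)/3) with hrdef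
      have hr0 : 0 < r := Real.rpow_pos_of_pos hc0 _
      have hr3 : r ^ 3 = Real.cosh y := by
        rw [hrdef, ← Real.rpow_natCast (Real.cosh y ^ ((1:ℝ)/3)) 3,
          ← Real.rpow_mul hc0.le]
        norm_num
      have hr1 : 1 < r := by
        by_contra h
        push_neg at h
        have : r ^ 3 ≤ 1 := pow_le_one₀ hr0.le h
        have hcy : 1 < Real.cosh y := (Real.one_lt_cosh).mpr hy.ne'
        rw [hr3] at this; linarith
      have e1 : Real.cosh y ^ p = r⁻¹ := by
        rw [hp, Real.rpow_neg hc0.le, hrdef]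
      have e2 : Real.cosh y ^ (p - 1) = (r ^ 4)⁻¹ := by
        have : p - 1 = ((1:ℝ)/3) * (-4) := by rw [hp]; norm_num
        rw [this, Real.rpow_mul hc0.le, ← hrdef,
          show ((-4:ℝ)) = ((-4:ℤ):ℝ) by norm_num, Real.rpow_intCast, zpow_neg]
        norm_cast
      have hs2 : Real.sinh y ^ 2 = r ^ 6 - 1 := by
        have := Real.cosh_sq y
        nlinarith [hr3]
      rw [e1, e2, ← hr3]
      have h1 : r ^ 3 * r⁻¹ = r ^ 2 := by field_simp
      have h2 : Real.sinh y * (Real.sinh y * p * (r ^ 4)⁻¹)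
          = -((r ^ 6 - 1) / (3 * r ^ 4)) := by
        have : Real.sinh y * (Real.sinh y * p * (r ^ 4)⁻¹)
            = Real.sinh y ^ 2 * p * (r ^ 4)⁻¹ := by ring
        rw [this, hs2, hp]
        field_simp
      rw [h1, h2]
      have h4 : (0:ℝ) < 3 * r ^ 4 := by positivity
      have hpos : 0 < (r ^ 2 - 1) ^ 2 * (2 * r ^ 2 + 1) := by
        have : 0 < r ^ 2 - 1 := by nlinarith
        positivity
      have hlt : (r ^ 6 - 1) / (3 * r ^ 4) < r ^ 2 - 1 := by
        rw [div_lt_iff₀ h4]; nlinarith [hpos]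
      linarith
  have h := hmono (Set.self_mem_Ici) (Set.mem_Ici.mpr hx.le) hx
  simp at h
  have hc0 : (0:ℝ) < Real.cosh x := Real.cosh_pos x
  have hq : (0:ℝ) < Real.cosh x ^ ((1:ℝ)/3) := Real.rpow_pos_of_pos hc0 _
  have := mul_lt_mul_of_pos_right h hq
  calc x * Real.cosh x ^ ((1:ℝ)/3)
      < Real.sinh x * Real.cosh x ^ (-(1/3):ℝ) * Real.cosh x ^ ((1:ℝ)/3) := this
    _ = Real.sinh x := by
        rw [mul_assoc, ← Real.rpow_add hc0]
        norm_num
set_option maxHeartbeats 1000000 in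
/-- Two-sided bounds for `|g(φ,t)|²`. -/
theorem gfun_sq_bounds (φ t : ℝ) (hφ : φ ∈ Set.Ioo 0 π) (ht : 0 < t) :
    t ^ 2 / 4 * Real.cos φ ^ 2 * Real.cosh (t / 2) ^ ((4 : ℝ) / 3) +
        Real.sin φ ^ 2 * Real.cosh t ^ ((2 : ℝ) / 3) <
      ‖gfun φ t‖ ^ 2 ∧
    ‖gfun φ t‖ ^ 2 <
      t ^ 2 / 4 * Real.cos φ ^ 2 * Real.cosh (t / 2) ^ (4 : ℕ) +
        Real.sin φ ^ 2 * Real.cosh t ^ (2 : ℕ) ∧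
    ‖gfun φ t‖ ^ 2 =
      (Real.cos φ ^ 2 * (Real.cosh t - 1) ^ 2 + Real.sin φ ^ 2 * Real.sinh t ^ 2) / t ^ 2 := by
  have hz : gfun φ t = ((Real.cos φ * (Real.cosh t - 1) : ℝ) +
      (Real.sin φ * Real.sinh t : ℝ) * Complex.I) / (t : ℂ) := by
    have hc : Complex.cos ((φ:ℂ) - Complex.I * (t:ℂ))
        = Complex.cos φ * Complex.cosh t + Complex.sin φ * (Complex.sinh t * Complex.I) := by
      rw [show Complex.I * (t:ℂ) = (t:ℂ) * Complex.I by ring, Complex.cos_sub,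
        Complex.cos_mul_I, Complex.sin_mul_I]
    rw [gfun, if_neg ht.ne', hc]
    push_cast
    ring_nf
  have habs : ‖gfun φ t‖ ^ 2 =
      (Real.cos φ ^ 2 * (Real.cosh t - 1) ^ 2 + Real.sin φ ^ 2 * Real.sinh t ^ 2) / t ^ 2 := by
    rw [hz, norm_div, Complex.norm_real, Real.norm_eq_abs, Complex.norm_add_mul_I, abs_of_pos ht, div_pow,
      Real.sq_sqrt (by positivity)]
    ring
  have hs : 0 < t / 2 := by linarith
  have hch : Real.cosh t - 1 = 2 * Real.sinh (t / 2) ^ 2 := by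
    have h1 : Real.cosh t = Real.cosh (t / 2) ^ 2 + Real.sinh (t / 2) ^ 2 := by
      have := Real.cosh_two_mul (t / 2)
      rwa [show 2 * (t / 2) = t by ring] at this
    have h2 := Real.cosh_sq (t / 2)
    nlinarith
  have hsin : 0 < Real.sin φ := Real.sin_pos_of_pos_of_lt_pi hφ.1 hφ.2
  have hsin2 : 0 < Real.sin φ ^ 2 := by positivity
  have hcos2 : 0 ≤ Real.cos φ ^ 2 := sq_nonneg _
  have hshs : 0 < Real.sinh (t / 2) := Real.sinh_pos_iff.mpr hs
  have hcs : 0 < Real.cosh (t / 2) := Real.cosh_pos _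
  have hct : 0 < Real.cosh t := Real.cosh_pos _
  -- fourth/second powers of the key inequalities
  have hr4 : (Real.cosh (t / 2) ^ ((1:ℝ)/3)) ^ (4:ℕ) = Real.cosh (t / 2) ^ ((4:ℝ)/3) := by
    rw [← Real.rpow_natCast (Real.cosh (t / 2) ^ ((1:ℝ)/3)) 4, ← Real.rpow_mul hcs.le]
    norm_num
  have hr2 : (Real.cosh t ^ ((1:ℝ)/3)) ^ (2:ℕ) = Real.cosh t ^ ((2:ℝ)/3) := by
    rw [← Real.rpow_natCast (Real.cosh t ^ ((1:ℝ)/3)) 2, ← Real.rpow_mul hct.le]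
    norm_num
  -- lower bound pieces
  have hA : t ^ 2 / 4 * Real.cosh (t / 2) ^ ((4:ℝ)/3) < (Real.cosh t - 1) ^ 2 / t ^ 2 := by
    have k := key2 (t / 2) hs
    have hpos : 0 ≤ t / 2 * Real.cosh (t / 2) ^ ((1:ℝ)/3) := by positivity
    have k4 : (t / 2 * Real.cosh (t / 2) ^ ((1:ℝ)/3)) ^ (4:ℕ) < Real.sinh (t / 2) ^ (4:ℕ) :=
      pow_lt_pow_left₀ k hpos (by norm_num)
    rw [mul_pow, hr4] at k4
    rw [hch, lt_div_iff₀ (by positivity)]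
    nlinarith [k4]
  have hB : Real.cosh t ^ ((2:ℝ)/3) < Real.sinh t ^ 2 / t ^ 2 := by
    have k := key2 t ht
    have hpos : 0 ≤ t * Real.cosh t ^ ((1:ℝ)/3) := by positivity
    have k2 : (t * Real.cosh t ^ ((1:ℝ)/3)) ^ (2:ℕ) < Real.sinh t ^ (2:ℕ) :=
      pow_lt_pow_left₀ k hpos (by norm_num)
    rw [mul_pow, hr2] at k2
    rw [lt_div_iff₀ (by positivity)]
    nlinarith [k2]
  -- upper bound pieces
  have hA' : (Real.cosh t - 1) ^ 2 / t ^ 2 < t ^ 2 / 4 * Real.cosh (t / 2) ^ (4:ℕ) := by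
    have k := key1 (t / 2) hs
    have k4 : Real.sinh (t / 2) ^ (4:ℕ) < (t / 2 * Real.cosh (t / 2)) ^ (4:ℕ) :=
      pow_lt_pow_left₀ k hshs.le (by norm_num)
    rw [mul_pow] at k4
    rw [hch, div_lt_iff₀ (by positivity)]
    nlinarith [k4]
  have hB' : Real.sinh t ^ 2 / t ^ 2 < Real.cosh t ^ (2:ℕ) := by
    have k := key1 t ht
    have hsh : 0 < Real.sinh t := Real.sinh_pos_iff.mpr ht
    have k2 : Real.sinh t ^ (2:ℕ) < (t * Real.cosh t) ^ (2:ℕ) :=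
      pow_lt_pow_left₀ k hsh.le (by norm_num)
    rw [mul_pow] at k2
    rw [div_lt_iff₀ (by positivity)]
    nlinarith [k2]
  have hsplit : (Real.cos φ ^ 2 * (Real.cosh t - 1) ^ 2 + Real.sin φ ^ 2 * Real.sinh t ^ 2) / t ^ 2
      = Real.cos φ ^ 2 * ((Real.cosh t - 1) ^ 2 / t ^ 2)
        + Real.sin φ ^ 2 * (Real.sinh t ^ 2 / t ^ 2) := by ring
  refine ⟨?_, ?_, habs⟩
  · rw [habs, hsplit]
    have h1 := mul_le_mul_of_nonneg_left hA.le hcos2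
    have h2 := mul_lt_mul_of_pos_left hB hsin2
    linarith [h1, h2]
  · rw [habs, hsplit]
    have h1 := mul_le_mul_of_nonneg_left hA'.le hcos2
    have h2 := mul_lt_mul_of_pos_left hB' hsin2
    linarith [h1, h2]
end
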